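/- Let G ∉ 𝒢 be a minimal brace, let e = b₀w be a strictly thin edge of G of index one with cubic end b₀, and suppose the simple brace H = Ĝ−e (the retract of G − e) is not minimal. Then for every superfluous edge f of H, the graph G − e has a cubic outer vertex that is an end of f, and the other end of f is noncubic. -/

import Mathlib

namespace MinimalBraces

open SimpleGraph

/-- The degree of a vertex, via the cardinality of its neighbor set. -/
noncomputable def mdeg {V : Type*} (G : SimpleGraph V) (v : V) : ℕ :=
  (G.neighborSet v).ncard

/-- `G` has a perfect matching. -/
def HasPerfectMatching {V : Type*} (G : SimpleGraph V) : Prop :=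
  ∃ M : G.Subgraph, M.IsPerfectMatching

/-- A connected graph with at least one edge is matching covered if every edge
lies in some perfect matching. -/
def IsMatchingCovered {V : Type*} (G : SimpleGraph V) : Prop :=
  G.Connected ∧ G.edgeSet.Nonempty ∧
    ∀ e ∈ G.edgeSet, ∃ M : G.Subgraph, M.IsPerfectMatching ∧ e ∈ M.edgeSet

/-- `A`, `B` are the color classes of a bipartition of `G`. -/
def IsBipartition {V : Type*} (G : SimpleGraph V) (A B : Set V) : Prop :=
  A ∪ B = Set.univ ∧ A ∩ B = ∅ ∧
    ∀ u v : V, G.Adj u v → (u ∈ A ∧ v ∈ B) ∨ (u ∈ B ∧ v ∈ A)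

/-- `G` is bipartite (admits a bipartition into two color classes). -/
def IsBipartite' {V : Type*} (G : SimpleGraph V) : Prop :=
  ∃ A B : Set V, IsBipartition G A B

/-- The cut `∂(X)`: the set of edges of `G` with exactly one end in `X`. -/
def cutEdges {V : Type*} (G : SimpleGraph V) (X : Set V) : Set (Sym2 V) :=
  {e | e ∈ G.edgeSet ∧ ∃ u v : V, e = s(u, v) ∧ u ∈ X ∧ v ∉ X}

/-- The cut `∂(X)` is tight: every perfect matching has exactly one edge in it. -/
def IsTightCut {V : Type*} (G : SimpleGraph V) (X : Set V) : Prop :=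
  ∀ M : G.Subgraph, M.IsPerfectMatching → (M.edgeSet ∩ cutEdges G X).ncard = 1

/-- A shore is trivial if it or its complement is a singleton. -/
def IsTrivialShore {V : Type*} (X : Set V) : Prop :=
  (∃ v, X = ({v} : Set V)) ∨ (∃ v, Xᶜ = ({v} : Set V))

/-- A brace: a bipartite matching covered graph free of nontrivial tight cuts. -/
def IsBrace {V : Type*} (G : SimpleGraph V) : Prop :=
  IsBipartite' G ∧ IsMatchingCovered G ∧ ∀ X : Set V, IsTightCut G X → IsTrivialShore X

/-- A minimal brace: deleting any edge results in a graph that is not a brace. -/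
def IsMinimalBrace {V : Type*} (G : SimpleGraph V) : Prop :=
  IsBrace G ∧ ∀ e ∈ G.edgeSet, ¬ IsBrace (G.deleteEdges {e})

/-- The neighborhood of a set of vertices. -/
def setNbhd {V : Type*} (G : SimpleGraph V) (Z : Set V) : Set V :=
  {v | ∃ z ∈ Z, G.Adj z v}

/-- An edge of a (simple) brace is superfluous if deleting it leaves a brace. -/
def IsSuperfluous {V : Type*} (G : SimpleGraph V) (e : Sym2 V) : Prop :=
  e ∈ G.edgeSet ∧ IsBrace (G.deleteEdges {e})

/-- A set of edges of `G` forming a matching. -/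
def IsMatchingSet {V : Type*} (G : SimpleGraph V) (M : Set (Sym2 V)) : Prop :=
  M ⊆ G.edgeSet ∧ ∀ e₁ ∈ M, ∀ e₂ ∈ M, e₁ ≠ e₂ → ∀ v : V, ¬ (v ∈ e₁ ∧ v ∈ e₂)

/-- `G` is 2-extendable: it has a matching of size two, and every matching of
size two extends to a perfect matching. -/
def IsTwoExtendable {V : Type*} (G : SimpleGraph V) : Prop :=
  (∃ M : Set (Sym2 V), IsMatchingSet G M ∧ M.ncard = 2) ∧
  ∀ M : Set (Sym2 V), IsMatchingSet G M → M.ncard = 2 →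
    ∃ N : G.Subgraph, N.IsPerfectMatching ∧ M ⊆ N.edgeSet

/-- `G` is 3-connected: more than three vertices, and removing any at most two
vertices leaves a connected graph. -/
def IsThreeConnected {V : Type*} [Fintype V] (G : SimpleGraph V) : Prop :=
  4 ≤ Fintype.card V ∧ ∀ S : Set V, S.ncard ≤ 2 → (G.induce Sᶜ).Connected

/-! ### Retracts (bicontraction of all degree-two vertices) -/

/-- `f : V → W` realizes `H` as the retract of `G`: the fibers of `f` are exactly
the closed neighborhoods of the degree-two vertices of `G` (and singletons
otherwise), and adjacency in `H` is induced by `G`. -/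
def IsRetractMap {V W : Type*} (G : SimpleGraph V) (H : SimpleGraph W) (f : V → W) : Prop :=
  Function.Surjective f ∧
  (∀ u v : V, f u = f v ↔ (u = v ∨ ∃ v₀ : V, mdeg G v₀ = 2 ∧
      u ∈ insert v₀ (G.neighborSet v₀) ∧ v ∈ insert v₀ (G.neighborSet v₀))) ∧
  (∀ x y : W, H.Adj x y ↔ (x ≠ y ∧ ∃ u v : V, G.Adj u v ∧ f u = x ∧ f v = y))

/-- The retract obtained via `f` is a simple graph, i.e. no two distinct edges of `G`
become parallel after the bicontractions. -/
def RetractMapSimple {V W : Type*} (G : SimpleGraph V) (f : V → W) : Prop :=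
  ∀ e₁ ∈ G.edgeSet, ∀ e₂ ∈ G.edgeSet,
    Sym2.map f e₁ = Sym2.map f e₂ → ¬ (Sym2.map f e₁).IsDiag → e₁ = e₂

/-- An edge `e` of a brace `G` is thin if the retract of `G − e` is also a brace. -/
def IsThinEdge {V : Type*} (G : SimpleGraph V) (e : Sym2 V) : Prop :=
  e ∈ G.edgeSet ∧ ∃ (sH : Set V) (H : SimpleGraph sH) (f : V → sH),
    IsRetractMap (G.deleteEdges {e}) H f ∧ IsBrace H

/-- `e` is a strictly thin edge of `G`, with retract `H` realized by the map `f`: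
the retract of `G − e` is a brace and is simple. -/
def IsStrictlyThinVia {V W : Type*} (G : SimpleGraph V) (e : Sym2 V)
    (H : SimpleGraph W) (f : V → W) : Prop :=
  e ∈ G.edgeSet ∧ IsRetractMap (G.deleteEdges {e}) H f ∧ IsBrace H ∧
    RetractMapSimple (G.deleteEdges {e}) f

/-- `e` is a strictly thin edge of the simple brace `G`. -/
def IsStrictlyThinEdge {V : Type*} (G : SimpleGraph V) (e : Sym2 V) : Prop :=
  ∃ (sH : Set V) (H : SimpleGraph sH) (f : V → sH), IsStrictlyThinVia G e H f

/-- The index of a (strictly thin) edge `e`, computed from `G' = G − e`: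
the number of vertices of degree two in `G'`. -/
noncomputable def thinIndex {V : Type*} (G' : SimpleGraph V) : ℕ :=
  {v : V | mdeg G' v = 2}.ncard

/-- An inner vertex of `G' = G − e`: a vertex of degree two. -/
def IsInnerVertex {V : Type*} (G' : SimpleGraph V) (v : V) : Prop := mdeg G' v = 2

/-- An outer vertex of `G' = G − e`: a neighbor of an inner vertex. -/
def IsOuterVertex {V : Type*} (G' : SimpleGraph V) (v : V) : Prop :=
  ∃ u : V, IsInnerVertex G' u ∧ G'.Adj u v

/-- `(e, F)` is a minimality-preserving pair of the minimal brace `G`, where the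
retract `H` of `G − e` is realized by `f`: the edge `e` is strictly thin and
`H − F` is a minimal brace. -/
def IsMPPVia {V W : Type*} (G : SimpleGraph V) (H : SimpleGraph W) (f : V → W)
    (e : Sym2 V) (F : Set (Sym2 W)) : Prop :=
  IsMinimalBrace G ∧ IsStrictlyThinVia G e H f ∧ F ⊆ H.edgeSet ∧
    IsMinimalBrace (H.deleteEdges F)

/-! ### Stable extensions -/

/-- The `S`-extension of `J` with respect to `S = {a₁, a₂, b₁, b₂}`:
two new vertices `a₀ = inr 0` and `b₀ = inr 1` and five new edges
`a₀b₁, a₀b₂, b₀a₁, b₀a₂, a₀b₀`. -/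
def stableExtGraph {U : Type*} (J : SimpleGraph U) (a₁ a₂ b₁ b₂ : U) :
    SimpleGraph (U ⊕ Fin 2) :=
  SimpleGraph.fromRel (fun x y =>
    match x, y with
    | Sum.inl u, Sum.inl v => J.Adj u v
    | Sum.inl u, Sum.inr k => (k = 0 ∧ (u = b₁ ∨ u = b₂)) ∨ (k = 1 ∧ (u = a₁ ∨ u = a₂))
    | Sum.inr j, Sum.inr k => j ≠ k
    | Sum.inr _, Sum.inl _ => False)

/-- `G` is (isomorphic to) a stable-extension of the connected bipartite graph `J`,
with respect to some stable set meeting each color class in exactly two vertices. -/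
def IsStableExtensionOf {V U : Type*} (G : SimpleGraph V) (J : SimpleGraph U) : Prop :=
  ∃ (A B : Set U) (a₁ a₂ b₁ b₂ : U), J.Connected ∧ IsBipartition J A B ∧
    a₁ ∈ A ∧ a₂ ∈ A ∧ b₁ ∈ B ∧ b₂ ∈ B ∧ a₁ ≠ a₂ ∧ b₁ ≠ b₂ ∧
    ¬ J.Adj a₁ b₁ ∧ ¬ J.Adj a₁ b₂ ∧ ¬ J.Adj a₂ b₁ ∧ ¬ J.Adj a₂ b₂ ∧
    Nonempty (G ≃g stableExtGraph J a₁ a₂ b₁ b₂)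

/-! ### Concrete families of graphs -/

/-- The complete graph on two vertices. -/
def K2graph : SimpleGraph (Fin 2) := ⊤

/-- The cycle graph `Cₙ` on `ZMod n`. -/
def cycleGraph (n : ℕ) : SimpleGraph (ZMod n) :=
  SimpleGraph.fromRel (fun x y => x - y = 1)

/-- The Möbius ladder `M_{2m}`: the cycle `C_{2m}` plus the long chords. -/
def mobiusLadder (m : ℕ) : SimpleGraph (ZMod (2 * m)) :=
  SimpleGraph.fromRel (fun x y => x - y = 1 ∨ x - y = (m : ZMod (2 * m)))

/-- The prism (ladder) over the cycle `Cₘ`. -/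
def prismGraph (m : ℕ) : SimpleGraph (ZMod m × Bool) :=
  SimpleGraph.fromRel (fun p q => (p.2 = q.2 ∧ p.1 - q.1 = 1) ∨ (p.1 = q.1 ∧ p.2 ≠ q.2))

/-- The biwheel `B_{2m+2}`: the cycle `C_{2m}` plus two nonadjacent hubs, one joined to
all even rim vertices, the other to all odd rim vertices. `B_{2n} = biwheel (n-1)`. -/
def biwheel (m : ℕ) : SimpleGraph (ZMod (2 * m) ⊕ Fin 2) :=
  SimpleGraph.fromRel (fun x y =>
    match x, y with
    | Sum.inl a, Sum.inl b => a - b = 1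
    | Sum.inl a, Sum.inr k => (k = 0 ∧ Even a) ∨ (k = 1 ∧ ¬ Even a)
    | Sum.inr _, _ => False)

/-- The complete bipartite graph `K_{3,3}`. -/
def K33graph : SimpleGraph (Fin 3 ⊕ Fin 3) := completeBipartiteGraph (Fin 3) (Fin 3)

/-- The family `𝒢` : `K₂`, `C₄` and the McCuaig braces
(prisms, Möbius ladders and biwheels). -/
def InMcCuaigFamily {V : Type*} (G : SimpleGraph V) : Prop :=
  Nonempty (G ≃g K2graph) ∨ Nonempty (G ≃g cycleGraph 4) ∨
  (∃ m : ℕ, 3 ≤ m ∧ Nonempty (G ≃g prismGraph m)) ∨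
  (∃ m : ℕ, 3 ≤ m ∧ Nonempty (G ≃g mobiusLadder m)) ∨
  (∃ m : ℕ, 3 ≤ m ∧ Nonempty (G ≃g biwheel m))

/-- The graph `Q_{2n}` (for `n ≥ 5`): color classes `{0, …, n-1}` on each side; the
hubs `0, 1` of each side are joined to all vertices `2, …, n-1` of the other side,
and the vertices `2, …, n-1` form a perfect matching between the two sides.
`Qgraph 5 = Q₁₀`, `Qgraph 6 = Q₁₂`, and `Qgraph n = Q_{2n}` of the family `𝒬` for `n ≥ 6`. -/
def Qgraph (n : ℕ) : SimpleGraph (Fin n ⊕ Fin n) :=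
  SimpleGraph.fromRel (fun x y =>
    match x, y with
    | Sum.inl i, Sum.inr j =>
        ((i : ℕ) < 2 ∧ 2 ≤ (j : ℕ)) ∨ ((j : ℕ) < 2 ∧ 2 ≤ (i : ℕ)) ∨
          ((i : ℕ) = (j : ℕ) ∧ 2 ≤ (i : ℕ))
    | _, _ => False)

/-- `Q₁₀⁺`: the graph `Q₁₀` plus an edge joining two noncubic vertices that lie in
distinct color classes (and in distinct `K_{3,3}`-pieces of the tight cut
decomposition of `Q₁₀`). -/
def Q10plus : SimpleGraph (Fin 5 ⊕ Fin 5) :=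
  Qgraph 5 ⊔ SimpleGraph.fromEdgeSet {s((Sum.inl 0 : Fin 5 ⊕ Fin 5), (Sum.inr 0 : Fin 5 ⊕ Fin 5))}

/-- The bipartite complement of `G` with respect to the color classes `A`, `B`. -/
def bipComplement {V : Type*} (G : SimpleGraph V) (A B : Set V) : SimpleGraph V :=
  SimpleGraph.fromRel (fun u v => u ∈ A ∧ v ∈ B ∧ ¬ G.Adj u v)

/-! ### Bi-splitting and expansion operations -/

/-- `G` is obtained from `H` by bi-splitting the noncubic vertex `b` into `b₁ a₀ b₂`,
as witnessed by the projection `f : W → V` (which sends `b₁, a₀, b₂` to `b` and is a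
bijection elsewhere). The edges of `H` at `b` are distributed between `b₁` and `b₂`,
each receiving at least two, and `a₀` is a new vertex adjacent precisely to `b₁, b₂`. -/
def IsBisplitMap {V W : Type*} (H : SimpleGraph V) (b : V) (G : SimpleGraph W)
    (b₁ a₀ b₂ : W) (f : W → V) : Prop :=
  4 ≤ mdeg H b ∧
  Function.Surjective f ∧ f b₁ = b ∧ f a₀ = b ∧ f b₂ = b ∧
  b₁ ≠ b₂ ∧ a₀ ≠ b₁ ∧ a₀ ≠ b₂ ∧
  (∀ u v : W, f u = f v → u = v ∨
      (u ∈ ({b₁, a₀, b₂} : Set W) ∧ v ∈ ({b₁, a₀, b₂} : Set W))) ∧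
  G.neighborSet a₀ = {b₁, b₂} ∧
  3 ≤ mdeg G b₁ ∧ 3 ≤ mdeg G b₂ ∧ ¬ G.Adj b₁ b₂ ∧
  (∀ x : W, x ≠ a₀ → ¬ (G.Adj b₁ x ∧ G.Adj b₂ x)) ∧
  (∀ x y : V, H.Adj x y ↔ (x ≠ y ∧ ∃ u v : W, G.Adj u v ∧ f u = x ∧ f v = y))

/-- Expansion of index zero: adding an edge joining two nonadjacent vertices in
distinct color classes. -/
def ExpansionZero {W V : Type*} (G : SimpleGraph W) (H : SimpleGraph V) : Prop :=
  ∃ (A B : Set V) (a b : V), IsBipartition H A B ∧ a ∈ A ∧ b ∈ B ∧ ¬ H.Adj a b ∧ a ≠ b ∧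
    Nonempty (G ≃g (H ⊔ SimpleGraph.fromEdgeSet {s(a, b)}))

/-- Expansion of index one: `G = H{a → a₁b₀a₂} + b₀w`, where `a, w` are in the same
color class of `H` and `a` is noncubic. -/
def ExpansionOne {W V : Type*} (G : SimpleGraph W) (H : SimpleGraph V) : Prop :=
  ∃ (A B : Set V) (a w : V), IsBipartition H A B ∧
    ((a ∈ A ∧ w ∈ A) ∨ (a ∈ B ∧ w ∈ B)) ∧ a ≠ w ∧ 4 ≤ mdeg H a ∧
    ∃ (G₁ : SimpleGraph W) (a₁ b₀ a₂ : W) (f : W → V) (w' : W),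
      IsBisplitMap H a G₁ a₁ b₀ a₂ f ∧ f w' = w ∧
      G = G₁ ⊔ SimpleGraph.fromEdgeSet {s(b₀, w')}

/-- Expansion of index two: `G = H{a → a₁b₀a₂}{b → b₁a₀b₂} + a₀b₀`, where `a, b` are
noncubic vertices of `H` in distinct color classes. -/
def ExpansionTwo {W V : Type*} (G : SimpleGraph W) (H : SimpleGraph V) : Prop :=
  ∃ (A B : Set V) (a b : V), IsBipartition H A B ∧ a ∈ A ∧ b ∈ B ∧
    4 ≤ mdeg H a ∧ 4 ≤ mdeg H b ∧
    ∃ (sm : Set W) (G₁ : SimpleGraph sm) (a₁ b₀ a₂ : sm) (g : sm → V),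
      IsBisplitMap H a G₁ a₁ b₀ a₂ g ∧
      ∃ (b' : sm) (G₂ : SimpleGraph W) (b₁ a₀ b₂ : W) (f : W → sm) (b₀' : W),
        g b' = b ∧ IsBisplitMap G₁ b' G₂ b₁ a₀ b₂ f ∧ f b₀' = b₀ ∧
        G = G₂ ⊔ SimpleGraph.fromEdgeSet {s(a₀, b₀')}

/-- `G` is obtained from `H` by an expansion operation (of index zero, one or two). -/
def IsExpansionOf {W V : Type*} (G : SimpleGraph W) (H : SimpleGraph V) : Prop :=
  ExpansionZero G H ∨ ExpansionOne G H ∨ ExpansionTwo G H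

/-! ### Narrow minimality-preserving pairs -/

/-- The properties of `F` (viewed in `G − e` via the retract map `fm`) required by the
Main Theorem: (i) if `index(e) = 1` then some outer vertex `v` has `F ⊆ ∂(v)`;
(ii) if `index(e) = 2` then some adjacent outer vertices `u, w` have `F ⊆ ∂({u,w})`;
(iii) for each `f ∈ F`, an end of `f` is cubic iff it is an outer vertex. -/
def NarrowProps {V W : Type*} (G : SimpleGraph V) (fm : V → W) (e : Sym2 V)
    (F : Set (Sym2 W)) : Prop :=
  (thinIndex (G.deleteEdges {e}) = 1 →
      ∃ v : V, IsOuterVertex (G.deleteEdges {e}) v ∧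
        ∀ g ∈ (G.deleteEdges {e}).edgeSet, Sym2.map fm g ∈ F → v ∈ g) ∧
  (thinIndex (G.deleteEdges {e}) = 2 →
      ∃ u w : V, IsOuterVertex (G.deleteEdges {e}) u ∧ IsOuterVertex (G.deleteEdges {e}) w ∧
        (G.deleteEdges {e}).Adj u w ∧
        ∀ g ∈ (G.deleteEdges {e}).edgeSet, Sym2.map fm g ∈ F →
          ((u ∈ g ∧ w ∉ g) ∨ (w ∈ g ∧ u ∉ g))) ∧
  (∀ g ∈ (G.deleteEdges {e}).edgeSet, Sym2.map fm g ∈ F →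
      ∀ x : V, x ∈ g → (mdeg G x = 3 ↔ IsOuterVertex (G.deleteEdges {e}) x))

/-- A narrow minimality-preserving pair, as in the Main Theorem. -/
def IsNarrowMPP {V W : Type*} (G : SimpleGraph V) (H : SimpleGraph W) (fm : V → W)
    (e : Sym2 V) (F : Set (Sym2 W)) : Prop :=
  IsMPPVia G H fm e F ∧
  (F = ∅ ∨ NarrowProps G fm e F) ∧
  F.ncard ≤ thinIndex (G.deleteEdges {e}) + 1 ∧
  (thinIndex (G.deleteEdges {e}) = 1 ∧ F.ncard = 2 →
    IsStableExtensionOf G (H.deleteEdges F))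


/-! ### Auxiliary lemmas -/

section Aux

variable {V : Type*}

open scoped Classical

/-- Partner function of a perfect matching. -/
noncomputable def pmPartner {G : SimpleGraph V} {M : G.Subgraph}
    (hM : M.IsPerfectMatching) (v : V) : V :=
  (hM.1 (hM.2 v)).choose

lemma pmPartner_adj {G : SimpleGraph V} {M : G.Subgraph}
    (hM : M.IsPerfectMatching) (v : V) : M.Adj v (pmPartner hM v) :=
  (hM.1 (hM.2 v)).choose_spec.1

lemma pmPartner_eq_of_adj {G : SimpleGraph V} {M : G.Subgraph}
    (hM : M.IsPerfectMatching) {v w : V} (h : M.Adj v w) : pmPartner hM v = w :=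
  ((hM.1 (hM.2 v)).choose_spec.2 w h).symm

lemma pmPartner_invol {G : SimpleGraph V} {M : G.Subgraph}
    (hM : M.IsPerfectMatching) (v : V) : pmPartner hM (pmPartner hM v) = v :=
  pmPartner_eq_of_adj hM (pmPartner_adj hM v).symm

lemma pmPartner_ne {G : SimpleGraph V} {M : G.Subgraph}
    (hM : M.IsPerfectMatching) (v : V) : pmPartner hM v ≠ v := by
  intro h
  have := pmPartner_adj hM v
  rw [h] at this
  exact (M.adj_sub this).ne rfl

lemma pmPartner_inj {G : SimpleGraph V} {M : G.Subgraph}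
    (hM : M.IsPerfectMatching) {u v : V} (h : pmPartner hM u = pmPartner hM v) : u = v := by
  have := congrArg (pmPartner hM) h
  rwa [pmPartner_invol, pmPartner_invol] at this

lemma pmPartner_gadj {G : SimpleGraph V} {M : G.Subgraph}
    (hM : M.IsPerfectMatching) (v : V) : G.Adj v (pmPartner hM v) :=
  M.adj_sub (pmPartner_adj hM v)

lemma pm_edge_mem {G : SimpleGraph V} {M : G.Subgraph}
    (hM : M.IsPerfectMatching) {u v : V} (h : M.Adj u v) : s(u, v) ∈ M.edgeSet := h

lemma pm_adj_of_edge_mem {G : SimpleGraph V} {M : G.Subgraph}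
    {u v : V} (h : s(u, v) ∈ M.edgeSet) : M.Adj u v := h

/-! #### Bipartition basics -/

lemma IsBipartition.symm {G : SimpleGraph V} {A B : Set V}
    (h : IsBipartition G A B) : IsBipartition G B A := by
  obtain ⟨hu, hi, hadj⟩ := h
  refine ⟨by rwa [Set.union_comm], by rwa [Set.inter_comm], fun u v huv => (hadj u v huv).symm⟩

lemma IsBipartition.not_mem_B {G : SimpleGraph V} {A B : Set V}
    (h : IsBipartition G A B) {u : V} (hu : u ∈ A) : u ∉ B := by
  intro hB
  have : u ∈ A ∩ B := ⟨hu, hB⟩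
  rw [h.2.1] at this
  exact this

lemma IsBipartition.mem_B_of_adj {G : SimpleGraph V} {A B : Set V}
    (h : IsBipartition G A B) {u v : V} (hu : u ∈ A) (huv : G.Adj u v) : v ∈ B := by
  rcases h.2.2 u v huv with ⟨_, hv⟩ | ⟨hu', _⟩
  · exact hv
  · exact absurd hu' (h.not_mem_B hu)

lemma IsBipartition.mem_or {G : SimpleGraph V} {A B : Set V}
    (h : IsBipartition G A B) (u : V) : u ∈ A ∨ u ∈ B := by
  have : u ∈ A ∪ B := by rw [h.1]; trivial
  exact this

end Aux
section Aux2

variable {V : Type*}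

lemma walk_crossing {G : SimpleGraph V} {X : Set V} :
    ∀ {u v : V}, G.Walk u v → u ∈ X → v ∉ X → ∃ x ∈ X, ∃ y, y ∉ X ∧ G.Adj x y := by
  intro u v w
  induction w with
  | nil => intro hu hv; exact absurd hu hv
  | @cons a b c h p ih =>
    intro hu hv
    by_cases hb : b ∈ X
    · exact ih hb hv
    · exact ⟨a, hu, b, hb, h⟩

lemma connected_crossing {G : SimpleGraph V} {X : Set V} (hconn : G.Connected)
    (h1 : X.Nonempty) (h2 : Xᶜ.Nonempty) : ∃ x ∈ X, ∃ y, y ∉ X ∧ G.Adj x y := by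
  obtain ⟨u, hu⟩ := h1
  obtain ⟨v, hv⟩ := h2
  obtain ⟨w⟩ := hconn.preconnected u v
  exact walk_crossing w hu hv

lemma even_ncard_closed [Finite V] (p : V → V) :
    ∀ n : ℕ, ∀ S : Set V, S.ncard = n → (∀ x ∈ S, p x ∈ S) →
      (∀ x ∈ S, p (p x) = x) → (∀ x ∈ S, p x ≠ x) → Even n := by
  intro n
  induction n using Nat.strong_induction_on with
  | _ n ih =>
    intro S hcard hmem hinv hne
    rcases Set.eq_empty_or_nonempty S with rfl | ⟨x, hx⟩
    · rw [Set.ncard_empty] at hcard; subst hcard; exact Even.zero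
    · have hpx : p x ∈ S := hmem x hx
      have hxpx : x ≠ p x := fun h => hne x hx h.symm
      have hpairsub : {x, p x} ⊆ S := by
        intro y hy; rcases hy with rfl | hy
        · exact hx
        · simp only [Set.mem_singleton_iff] at hy; subst hy; exact hpx
      have hpair : ({x, p x} : Set V).ncard = 2 := Set.ncard_pair hxpx
      have hSfin : S.Finite := Set.toFinite S
      have hdiff : (S \ {x, p x}).ncard = n - 2 := by
        rw [Set.ncard_diff hpairsub, hpair, hcard]
      have h2n : 2 ≤ n := by
        rw [← hcard, ← hpair]
        exact Set.ncard_le_ncard hpairsub hSfin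
      have hmem' : ∀ y ∈ S \ {x, p x}, p y ∈ S \ {x, p x} := by
        rintro y ⟨hyS, hy2⟩
        refine ⟨hmem y hyS, ?_⟩
        simp only [Set.mem_insert_iff, Set.mem_singleton_iff] at hy2 ⊢
        push_neg at hy2 ⊢
        constructor
        · intro h; apply hy2.2; rw [← hinv y hyS, h]
        · intro h
          apply hy2.1
          have := congrArg p h
          rwa [hinv y hyS, hinv x hx] at this
      have heven : Even (n - 2) := by
        refine ih (n - 2) (by omega) (S \ {x, p x}) hdiff hmem' ?_ ?_
        · exact fun y hy => hinv y hy.1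
        · exact fun y hy => hne y hy.1
      obtain ⟨k, hk⟩ := heven
      exact ⟨k + 1, by omega⟩

lemma setNbhd_subset_class {G : SimpleGraph V} {A B : Set V}
    (hbip : IsBipartition G A B) {S : Set V} (hS : S ⊆ A) : setNbhd G S ⊆ B := by
  rintro v ⟨z, hz, hadj⟩
  exact hbip.mem_B_of_adj (hS hz) hadj

lemma partner_image_subset {G : SimpleGraph V} {M : G.Subgraph}
    (hM : M.IsPerfectMatching) (S : Set V) : pmPartner hM '' S ⊆ setNbhd G S := by
  rintro v ⟨s, hs, rfl⟩
  exact ⟨s, hs, pmPartner_gadj hM s⟩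

lemma ncard_le_setNbhd [Finite V] {G : SimpleGraph V} {M : G.Subgraph}
    (hM : M.IsPerfectMatching) (S : Set V) : S.ncard ≤ (setNbhd G S).ncard := by
  rw [← Set.ncard_image_of_injOn (f := pmPartner hM) (fun a _ b _ h => pmPartner_inj hM h)]
  exact Set.ncard_le_ncard (partner_image_subset hM S) (Set.toFinite _)

lemma class_ncard_eq [Finite V] {G : SimpleGraph V} {A B : Set V}
    (hbip : IsBipartition G A B) {M : G.Subgraph} (hM : M.IsPerfectMatching) :
    A.ncard = B.ncard := by
  have h1 : ∀ (A' B' : Set V), IsBipartition G A' B' → A'.ncard ≤ B'.ncard := by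
    intro A' B' hbip'
    have himg : pmPartner hM '' A' ⊆ B' := by
      rintro v ⟨a, ha, rfl⟩
      exact hbip'.mem_B_of_adj ha (pmPartner_gadj hM a)
    rw [← Set.ncard_image_of_injOn (f := pmPartner hM) (fun a _ b _ h => pmPartner_inj hM h)]
    exact Set.ncard_le_ncard himg (Set.toFinite _)
  exact le_antisymm (h1 A B hbip) (h1 B A hbip.symm)

end Aux2
section Counting

variable {V : Type*} [Finite V] {G : SimpleGraph V} {A B : Set V}

/-- In a connected matching covered bipartite graph, every nonempty proper subset of a
color class has at least `|S| + 1` neighbors. -/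
lemma nbhd_ge_succ (hbip : IsBipartition G A B) (hconn : G.Connected)
    (hmc : ∀ e ∈ G.edgeSet, ∃ M : G.Subgraph, M.IsPerfectMatching ∧ e ∈ M.edgeSet)
    {S : Set V} (hSA : S ⊆ A) (hne : S.Nonempty) (hproper : S ≠ A) :
    S.ncard + 1 ≤ (setNbhd G S).ncard := by
  set N := setNbhd G S with hN
  by_contra hcon
  push_neg at hcon
  -- image/closure facts for an arbitrary perfect matching
  have key : ∀ (M : G.Subgraph) (hM : M.IsPerfectMatching), ∀ x ∈ S ∪ N,
      pmPartner hM x ∈ S ∪ N := by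
    intro M hM
    have hle : S.ncard ≤ N.ncard := ncard_le_setNbhd hM S
    have heq : N.ncard = S.ncard := by omega
    have himg : pmPartner hM '' S = N := by
      refine Set.eq_of_subset_of_ncard_le (partner_image_subset hM S) ?_ (Set.toFinite _)
      rw [Set.ncard_image_of_injOn (fun a _ b _ h => pmPartner_inj hM h)]
      omega
    intro x hx
    rcases hx with hx | hx
    · right; rw [← himg]; exact ⟨x, hx, rfl⟩
    · left
      rw [← himg] at hx
      obtain ⟨s, hs, hps⟩ := hx
      have : pmPartner hM x = s := by rw [← hps, pmPartner_invol]
      rwa [this]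
  -- a crossing edge exists
  have hXne : (S ∪ N).Nonempty := hne.mono Set.subset_union_left
  have hXcne : (S ∪ N)ᶜ.Nonempty := by
    obtain ⟨a, haA, haS⟩ := Set.exists_of_ssubset (hSA.ssubset_of_ne hproper)
    refine ⟨a, ?_⟩
    intro h
    rcases h with h | h
    · exact haS h
    · exact hbip.not_mem_B haA (setNbhd_subset_class hbip hSA h)
  obtain ⟨x, hx, y, hy, hadj⟩ := connected_crossing hconn hXne hXcne
  obtain ⟨M, hM, hgM⟩ := hmc s(x, y) hadj
  have : y = pmPartner hM x := (pmPartner_eq_of_adj hM (pm_adj_of_edge_mem hgM)).symm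
  exact hy (this ▸ key M hM x hx)

/-- In a brace, every nonempty subset of a color class with `|S| ≤ |A| - 2` has
at least `|S| + 2` neighbors. -/
lemma brace_nbhd_ge (hbip : IsBipartition G A B) (hbrace : IsBrace G)
    {S : Set V} (hSA : S ⊆ A) (hne : S.Nonempty) (hsmall : S.ncard + 2 ≤ A.ncard) :
    S.ncard + 2 ≤ (setNbhd G S).ncard := by
  obtain ⟨_, ⟨hconn, hEne, hmc⟩, hntc⟩ := hbrace
  set N := setNbhd G S with hN
  have hNB : N ⊆ B := setNbhd_subset_class hbip hSA
  have hproper : S ≠ A := by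
    intro h
    subst h
    omega
  have hge1 : S.ncard + 1 ≤ N.ncard := nbhd_ge_succ hbip hconn hmc hSA hne hproper
  by_contra hcon
  push_neg at hcon
  have heq : N.ncard = S.ncard + 1 := by omega
  set X := S ∪ N with hX
  -- X is a tight cut shore
  have htight : IsTightCut G X := by
    intro M hM
    have himgsub : pmPartner hM '' S ⊆ N := partner_image_subset hM S
    have himgcard : (pmPartner hM '' S).ncard = S.ncard :=
      Set.ncard_image_of_injOn (fun a _ b _ h => pmPartner_inj hM h)
    have hdiffcard : (N \ (pmPartner hM '' S)).ncard = 1 := by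
      rw [Set.ncard_diff himgsub, himgcard, heq]
      omega
    obtain ⟨y₀, hy₀⟩ := Set.ncard_eq_one.mp hdiffcard
    have hy₀N : y₀ ∈ N := by
      have : y₀ ∈ N \ (pmPartner hM '' S) := hy₀ ▸ rfl
      exact this.1
    have hy₀img : y₀ ∉ pmPartner hM '' S := by
      have : y₀ ∈ N \ (pmPartner hM '' S) := hy₀ ▸ rfl
      exact this.2
    set z₀ := pmPartner hM y₀ with hz₀
    have hz₀X : z₀ ∉ X := by
      intro hzX
      rcases hzX with hz | hz
      · apply hy₀img
        exact ⟨z₀, hz, by rw [hz₀, pmPartner_invol]⟩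
      · have : z₀ ∈ A := (hbip.symm).mem_B_of_adj (hNB hy₀N) (pmPartner_gadj hM y₀)
        exact hbip.not_mem_B this (hNB hz)
    have hmemint : s(y₀, z₀) ∈ M.edgeSet ∩ cutEdges G X := by
      constructor
      · exact pm_edge_mem hM (pmPartner_adj hM y₀)
      · exact ⟨(pmPartner_gadj hM y₀), y₀, z₀, rfl, Or.inr hy₀N, hz₀X⟩
    have hsub : M.edgeSet ∩ cutEdges G X ⊆ {s(y₀, z₀)} := by
      rintro g ⟨hgM, hgG, u, v, rfl, huX, hvX⟩
      have hMadj : M.Adj u v := pm_adj_of_edge_mem hgM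
      have hvp : v = pmPartner hM u := (pmPartner_eq_of_adj hM hMadj).symm
      rcases huX with hu | hu
      · exfalso
        apply hvX
        right
        rw [hvp]
        exact himgsub ⟨u, hu, rfl⟩
      · have hu_img : u ∉ pmPartner hM '' S := by
          intro himg'
          obtain ⟨s, hs, hps⟩ := himg'
          apply hvX
          left
          rw [hvp, ← hps, pmPartner_invol]
          exact hs
        have huy : u = y₀ := by
          have hmem : u ∈ N \ (pmPartner hM '' S) := ⟨hu, hu_img⟩
          rw [hy₀] at hmem
          exact hmem
        subst huy
        rw [Set.mem_singleton_iff, hvp]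
    have hset : M.edgeSet ∩ cutEdges G X = {s(y₀, z₀)} :=
      Set.Subset.antisymm hsub (by rintro g rfl; exact hmemint)
    rw [hset, Set.ncard_singleton]
  -- the shore X is nontrivial: contradiction
  have htriv := hntc X htight
  have hS1 : 1 ≤ S.ncard := (Set.ncard_pos (Set.toFinite S)).mpr hne
  have hN2 : 2 ≤ N.ncard := by omega
  have hAS : 2 ≤ (A \ S).ncard := by
    rw [Set.ncard_diff hSA]
    omega
  rcases htriv with ⟨v, hv⟩ | ⟨v, hv⟩
  · have : N.ncard ≤ 1 := by
      have hsub' : N ⊆ ({v} : Set V) := hv ▸ Set.subset_union_right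
      simpa using Set.ncard_le_ncard hsub' (Set.toFinite _)
    omega
  · have hASX : A \ S ⊆ Xᶜ := by
      rintro a ⟨haA, haS⟩
      intro hX'
      rcases hX' with h | h
      · exact haS h
      · exact hbip.not_mem_B haA (hNB h)
    have : (A \ S).ncard ≤ 1 := by
      have := Set.ncard_le_ncard (hv ▸ hASX) (Set.toFinite _)
      simpa using this
    omega

end Counting
section Hall

/-- Hall-type construction: a perfect matching through a prescribed edge. -/
lemma hall_pm {V : Type*} [Fintype V] {J : SimpleGraph V} {A B : Set V}
    (hbip : IsBipartition J A B) (hcard : A.ncard = B.ncard)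
    {c d : V} (hcd : J.Adj c d) (hcA : c ∈ A) (hdB : d ∈ B)
    (hH : ∀ S : Set V, S ⊆ A \ {c} → S.ncard ≤ (setNbhd J S \ {d}).ncard) :
    ∃ M : J.Subgraph, M.IsPerfectMatching ∧ s(c, d) ∈ M.edgeSet := by
  classical
  set ι := ↥(A \ {c}) with hι
  set t : ι → Finset V := fun i => Set.toFinset (J.neighborSet ↑i \ {d}) with ht
  have hmem_t : ∀ (i : ι) (y : V), y ∈ t i ↔ J.Adj ↑i y ∧ y ≠ d := by
    intro i y
    simp [ht, Set.mem_toFinset, SimpleGraph.mem_neighborSet]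
  have hcond : ∀ s : Finset ι, s.card ≤ (s.biUnion t).card := by
    intro s
    set S : Set V := (fun (i : ι) => (i : V)) '' (↑s : Set ι) with hS
    have hScard : S.ncard = s.card := by
      rw [Set.ncard_image_of_injOn (Set.injOn_of_injective Subtype.val_injective)]
      exact Set.ncard_coe_finset s
    have hSsub : S ⊆ A \ {c} := by
      rintro x ⟨i, _, rfl⟩
      exact i.2
    have hsub2 : setNbhd J S \ {d} ⊆ ↑(s.biUnion t) := by
      rintro y ⟨⟨z, hz, hadj⟩, hyd⟩
      obtain ⟨i, his, rfl⟩ := hz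
      simp only [Finset.coe_biUnion, Set.mem_iUnion, Finset.mem_coe]
      refine ⟨i, his, ?_⟩
      rw [hmem_t]
      exact ⟨hadj, hyd⟩
    calc s.card = S.ncard := hScard.symm
      _ ≤ (setNbhd J S \ {d}).ncard := hH S hSsub
      _ ≤ (↑(s.biUnion t) : Set V).ncard := Set.ncard_le_ncard hsub2 (Set.toFinite _)
      _ = (s.biUnion t).card := Set.ncard_coe_finset _
  obtain ⟨F, hFinj, hFmem⟩ := (Finset.all_card_le_biUnion_card_iff_exists_injective t).mp hcond
  have hFadj : ∀ i : ι, J.Adj ↑i (F i) := fun i => ((hmem_t i (F i)).mp (hFmem i)).1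
  have hFd : ∀ i : ι, F i ≠ d := fun i => ((hmem_t i (F i)).mp (hFmem i)).2
  have hFB : ∀ i : ι, F i ∈ B := fun i => hbip.mem_B_of_adj (i.2.1) (hFadj i)
  -- the range of F is exactly B \ {d}
  have hransub : Set.range F ⊆ B \ {d} := by
    rintro v ⟨i, rfl⟩
    exact ⟨hFB i, hFd i⟩
  have hrancard : (Set.range F).ncard = (A \ {c}).ncard := by
    rw [← Set.image_univ, Set.ncard_image_of_injOn (Set.injOn_of_injective hFinj),
      Set.ncard_univ, hι, Nat.card_coe_set_eq]
  have hran : Set.range F = B \ {d} := by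
    refine Set.eq_of_subset_of_ncard_le hransub ?_ (Set.toFinite _)
    rw [hrancard, Set.ncard_diff_singleton_of_mem hcA, Set.ncard_diff_singleton_of_mem hdB,
      hcard]
  have hcd_ne : c ≠ d := fun h => hbip.not_mem_B hcA (h ▸ hdB)
  -- build the matching subgraph
  set MAdj : V → V → Prop := fun u v =>
    (u = c ∧ v = d) ∨ (u = d ∧ v = c) ∨ (∃ i : ι, ↑i = u ∧ F i = v) ∨
      (∃ i : ι, ↑i = v ∧ F i = u) with hMAdj
  have hMsymm : ∀ u v, MAdj u v → MAdj v u := by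
    intro u v h
    rcases h with ⟨h1, h2⟩ | ⟨h1, h2⟩ | ⟨i, h1, h2⟩ | ⟨i, h1, h2⟩
    · exact Or.inr (Or.inl ⟨h2, h1⟩)
    · exact Or.inl ⟨h2, h1⟩
    · exact Or.inr (Or.inr (Or.inr ⟨i, h1, h2⟩))
    · exact Or.inr (Or.inr (Or.inl ⟨i, h1, h2⟩))
  have hMadj_sub : ∀ u v, MAdj u v → J.Adj u v := by
    intro u v h
    rcases h with ⟨h1, h2⟩ | ⟨h1, h2⟩ | ⟨i, h1, h2⟩ | ⟨i, h1, h2⟩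
    · subst h1; subst h2; exact hcd
    · subst h1; subst h2; exact hcd.symm
    · subst h1; subst h2; exact hFadj i
    · subst h1; subst h2; exact (hFadj i).symm
  set M : J.Subgraph :=
    { verts := Set.univ
      Adj := MAdj
      adj_sub := fun {u v} h => hMadj_sub u v h
      edge_vert := fun {u v} _ => Set.mem_univ u
      symm := ⟨fun u v h => hMsymm u v h⟩ } with hM
  have hAc_disj : ∀ i : ι, (↑i : V) ≠ c := fun i => i.2.2
  have hAc_A : ∀ i : ι, (↑i : V) ∈ A := fun i => i.2.1
  have hnotAB : ∀ x, x ∈ A → x ∉ B := fun x hx => hbip.not_mem_B hx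
  -- perfect matching
  have hpm : M.IsPerfectMatching := by
    rw [SimpleGraph.Subgraph.isPerfectMatching_iff]
    intro v
    rcases eq_or_ne v c with rfl | hvc
    · refine ⟨d, Or.inl ⟨rfl, rfl⟩, ?_⟩
      intro w hw
      rcases hw with ⟨h1, h2⟩ | ⟨h1, h2⟩ | ⟨i, h1, h2⟩ | ⟨i, h1, h2⟩
      · exact h2
      · exact absurd h1 hcd_ne
      · exact absurd h1 (hAc_disj i)
      · exact absurd hcA (fun hc => hnotAB _ hc ((h2 ▸ hFB i)))
    rcases eq_or_ne v d with rfl | hvd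
    · refine ⟨c, Or.inr (Or.inl ⟨rfl, rfl⟩), ?_⟩
      intro w hw
      rcases hw with ⟨h1, h2⟩ | ⟨h1, h2⟩ | ⟨i, h1, h2⟩ | ⟨i, h1, h2⟩
      · exact absurd h1.symm hcd_ne
      · exact h2
      · exact absurd (h1 ▸ hAc_A i) (fun h => hnotAB _ h hdB)
      · exact absurd h2 (hFd i)
    rcases hbip.mem_or v with hvA | hvB
    · -- v ∈ A \ {c}
      set i₀ : ι := ⟨v, hvA, hvc⟩ with hi₀
      refine ⟨F i₀, Or.inr (Or.inr (Or.inl ⟨i₀, rfl, rfl⟩)), ?_⟩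
      intro w hw
      rcases hw with ⟨h1, h2⟩ | ⟨h1, h2⟩ | ⟨i, h1, h2⟩ | ⟨i, h1, h2⟩
      · exact absurd h1 hvc
      · exact absurd h1 hvd
      · have : i = i₀ := Subtype.ext h1
        rw [← h2, this]
      · exact absurd (h2 ▸ hFB i) (hnotAB v hvA)
    · -- v ∈ B; v ≠ d so v ∈ range F
      have hvmem : v ∈ Set.range F := hran ▸ ⟨hvB, hvd⟩
      obtain ⟨i₀, hi₀⟩ := hvmem
      refine ⟨↑i₀, Or.inr (Or.inr (Or.inr ⟨i₀, rfl, hi₀⟩)), ?_⟩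
      intro w hw
      rcases hw with ⟨h1, h2⟩ | ⟨h1, h2⟩ | ⟨i, h1, h2⟩ | ⟨i, h1, h2⟩
      · exact absurd hvB (fun h => hnotAB v (h1 ▸ hcA) h)
      · exact absurd h1 hvd
      · exact absurd (h1 ▸ hAc_A i) (fun h => hnotAB v h hvB)
      · have : i = i₀ := hFinj (h2.trans hi₀.symm)
        rw [← h1, this]
  exact ⟨M, hpm, Or.inl ⟨rfl, rfl⟩⟩

end Hall
section DeletedEdge

variable {V : Type*} [Fintype V] {G : SimpleGraph V} {A B : Set V}

lemma bip_deleteEdges (hbip : IsBipartition G A B) (E : Set (Sym2 V)) :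
    IsBipartition (G.deleteEdges E) A B :=
  ⟨hbip.1, hbip.2.1, fun u v huv => hbip.2.2 u v ((SimpleGraph.deleteEdges_adj).mp huv).1⟩

/-- Hall condition for `G - ab` relative to a missing vertex pair `(c,d)`. -/
lemma hall_cond_delete (hbip : IsBipartition G A B) (hbrace : IsBrace G)
    (hcard : A.ncard = B.ncard) (hn : 3 ≤ A.ncard)
    (hmin : ∀ y : V, 3 ≤ (G.neighborSet y).ncard)
    {a b c d : V} (haA : a ∈ A) (hbB : b ∈ B) (hcA : c ∈ A) (hdB : d ∈ B) :
    ∀ S : Set V, S ⊆ A \ {c} →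
      S.ncard ≤ (setNbhd (G.deleteEdges {s(a, b)}) S \ {d}).ncard := by
  intro S hS
  set J := G.deleteEdges {s(a, b)} with hJ
  rcases Set.eq_empty_or_nonempty S with rfl | hne
  · simp
  have hSA : S ⊆ A := hS.trans Set.diff_subset
  -- general containment
  have hcont : setNbhd G S \ {b, d} ⊆ setNbhd J S \ {d} := by
    rintro y ⟨⟨z, hz, hadj⟩, hy⟩
    simp only [Set.mem_insert_iff, Set.mem_singleton_iff] at hy
    push_neg at hy
    refine ⟨⟨z, hz, ?_⟩, hy.2⟩
    rw [hJ, SimpleGraph.deleteEdges_adj]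
    refine ⟨hadj, ?_⟩
    simp only [Set.mem_singleton_iff, Sym2.eq_iff]
    rintro (⟨h1, h2⟩ | ⟨h1, h2⟩)
    · exact hy.1 h2
    · have hyB : y ∈ B := hbip.mem_B_of_adj (hSA hz) hadj
      exact hbip.not_mem_B (h2 ▸ haA) hyB
  have hcard_cont : (setNbhd G S).ncard - 2 ≤ (setNbhd J S \ {d}).ncard := by
    have h1 : (setNbhd G S \ {b, d}).ncard ≤ (setNbhd J S \ {d}).ncard :=
      Set.ncard_le_ncard hcont (Set.toFinite _)
    have h2 : (setNbhd G S).ncard ≤ (setNbhd G S \ {b, d}).ncard + ({b, d} : Set V).ncard :=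
      Set.ncard_le_ncard_diff_add_ncard _ _ (Set.toFinite _)
    have h3 : ({b, d} : Set V).ncard ≤ 2 := Set.ncard_insert_le _ _ |>.trans (by simp)
    omega
  by_cases hsmall : S.ncard + 2 ≤ A.ncard
  · have := brace_nbhd_ge hbip hbrace hSA hne hsmall
    omega
  · -- S = A \ {c}
    push_neg at hsmall
    have hcsub : ({c} : Set V) ⊆ A := by simpa using hcA
    have hScard : (A \ {c}).ncard ≤ S.ncard := by
      rw [Set.ncard_diff hcsub, Set.ncard_singleton]
      omega
    have hSeq : S = A \ {c} := Set.eq_of_subset_of_ncard_le hS hScard (Set.toFinite _)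
    have hsub : B \ {d} ⊆ setNbhd J S \ {d} := by
      rintro y ⟨hyB, hyd⟩
      refine ⟨?_, hyd⟩
      have h3' := hmin y
      -- y has a neighbor z ∈ A with z ≠ c, z ≠ a
      have hz : ((G.neighborSet y) \ {c, a}).Nonempty := by
        rw [← Set.ncard_pos (Set.toFinite _)]
        have h2 : (G.neighborSet y).ncard ≤ ((G.neighborSet y) \ {c, a}).ncard +
            ({c, a} : Set V).ncard := Set.ncard_le_ncard_diff_add_ncard _ _ (Set.toFinite _)
        have h3 : ({c, a} : Set V).ncard ≤ 2 := Set.ncard_insert_le _ _ |>.trans (by simp)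
        omega
      obtain ⟨z, hzy, hz2⟩ := hz
      simp only [Set.mem_insert_iff, Set.mem_singleton_iff] at hz2
      push_neg at hz2
      have hzA : z ∈ A := hbip.symm.mem_B_of_adj hyB hzy
      refine ⟨z, ?_, ?_⟩
      · rw [hSeq]; exact ⟨hzA, hz2.1⟩
      · rw [hJ, SimpleGraph.deleteEdges_adj]
        refine ⟨hzy.symm, ?_⟩
        simp only [Set.mem_singleton_iff, Sym2.eq_iff]
        rintro (⟨h1, h2⟩ | ⟨h1, h2⟩)
        · exact hz2.2 h1
        · exact hbip.not_mem_B hzA (h1 ▸ hbB)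
    have : (B \ {d}).ncard ≤ (setNbhd J S \ {d}).ncard :=
      Set.ncard_le_ncard hsub (Set.toFinite _)
    rw [Set.ncard_diff_singleton_of_mem hdB] at this
    have hSc : S.ncard = A.ncard - 1 := by
      rw [hSeq, Set.ncard_diff hcsub, Set.ncard_singleton]
    omega

end DeletedEdge
section DeletedEdge2

variable {V : Type*} [Fintype V] {G : SimpleGraph V} {A B : Set V}

lemma deleted_mc (hbip : IsBipartition G A B) (hbrace : IsBrace G)
    (hcard : A.ncard = B.ncard) (hn : 3 ≤ A.ncard)
    (hmin : ∀ y : V, 3 ≤ (G.neighborSet y).ncard)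
    {a b : V} (haA : a ∈ A) (hbB : b ∈ B) :
    ∀ g ∈ (G.deleteEdges {s(a, b)}).edgeSet,
      ∃ M : (G.deleteEdges {s(a, b)}).Subgraph, M.IsPerfectMatching ∧ g ∈ M.edgeSet := by
  intro g hg
  set J := G.deleteEdges {s(a, b)} with hJdef
  have hbipJ : IsBipartition J A B := bip_deleteEdges hbip _
  induction g using Sym2.ind with
  | _ c d =>
  have hadj : J.Adj c d := (SimpleGraph.mem_edgeSet _).mp hg
  rcases hbip.mem_or c with hcA | hcB
  · have hdB : d ∈ B := hbipJ.mem_B_of_adj hcA hadj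
    obtain ⟨M, hM, hmem⟩ := hall_pm hbipJ hcard hadj hcA hdB
      (fun S hS => hall_cond_delete hbip hbrace hcard hn hmin haA hbB hcA hdB S hS)
    exact ⟨M, hM, hmem⟩
  · have hdA : d ∈ A := hbipJ.symm.mem_B_of_adj hcB hadj
    have hswap : G.deleteEdges {s(b, a)} = J := by
      rw [hJdef, Sym2.eq_swap]
    have hnB : 3 ≤ B.ncard := hcard ▸ hn
    obtain ⟨M, hM, hmem⟩ := hall_pm hbipJ.symm hcard.symm hadj hcB hdA
      (fun S hS => by
        have := hall_cond_delete hbip.symm hbrace hcard.symm hnB hmin hbB haA hcB hdA S hS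
        rwa [hswap] at this)
    exact ⟨M, hM, hmem⟩

lemma reach_cases {G : SimpleGraph V} {a b : V} :
    ∀ {x y : V}, G.Walk x y →
      (G.deleteEdges {s(a, b)}).Reachable x y ∨
      ((G.deleteEdges {s(a, b)}).Reachable x a ∧ (G.deleteEdges {s(a, b)}).Reachable b y) ∨
      ((G.deleteEdges {s(a, b)}).Reachable x b ∧ (G.deleteEdges {s(a, b)}).Reachable a y) := by
  intro x y w
  set J := G.deleteEdges {s(a, b)} with hJdef
  induction w with
  | nil => exact Or.inl (SimpleGraph.Reachable.refl _)
  | @cons u z y h p ih =>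
    by_cases hJ : J.Adj u z
    · have huz : J.Reachable u z := hJ.reachable
      rcases ih with r | ⟨r1, r2⟩ | ⟨r1, r2⟩
      · exact Or.inl (huz.trans r)
      · exact Or.inr (Or.inl ⟨huz.trans r1, r2⟩)
      · exact Or.inr (Or.inr ⟨huz.trans r1, r2⟩)
    · have hmem : s(u, z) = s(a, b) := by
        by_contra hne
        apply hJ
        rw [hJdef, SimpleGraph.deleteEdges_adj]
        exact ⟨h, by simpa using hne⟩
      rw [Sym2.eq_iff] at hmem
      rcases hmem with ⟨rfl, rfl⟩ | ⟨rfl, rfl⟩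
      · rcases ih with r | ⟨r1, r2⟩ | ⟨r1, r2⟩
        · exact Or.inr (Or.inl ⟨SimpleGraph.Reachable.refl _, r⟩)
        · exact Or.inl (r1.symm.trans r2)
        · exact Or.inl r2
      · rcases ih with r | ⟨r1, r2⟩ | ⟨r1, r2⟩
        · exact Or.inr (Or.inr ⟨SimpleGraph.Reachable.refl _, r⟩)
        · exact Or.inl r2
        · exact Or.inl (r1.symm.trans r2)

lemma deleted_connected {G : SimpleGraph V} (hconn : G.Connected) {a b : V}
    {N : (G.deleteEdges {s(a, b)}).Subgraph} (hN : N.IsPerfectMatching)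
    {M : G.Subgraph} (hM : M.IsPerfectMatching) (hfM : s(a, b) ∈ M.edgeSet) :
    (G.deleteEdges {s(a, b)}).Connected := by
  set J := G.deleteEdges {s(a, b)} with hJdef
  have hab : G.Adj a b := M.adj_sub (pm_adj_of_edge_mem hfM)
  have hne : a ≠ b := hab.ne
  have key : J.Reachable a b := by
    by_contra hr
    set C := {x | J.Reachable x a} with hC
    have haC : a ∈ C := SimpleGraph.Reachable.refl _
    have hbC : b ∉ C := fun h => hr (SimpleGraph.Reachable.symm h)
    have hC_N : ∀ x ∈ C, pmPartner hN x ∈ C := by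
      intro x hx
      exact ((pmPartner_gadj hN x).symm.reachable).trans hx
    have even1 : Even C.ncard :=
      even_ncard_closed (pmPartner hN) C.ncard C rfl hC_N
        (fun x _ => pmPartner_invol hN x) (fun x _ => pmPartner_ne hN x)
    have hpa : pmPartner hM a = b := pmPartner_eq_of_adj hM (pm_adj_of_edge_mem hfM)
    have hC_M : ∀ x ∈ C \ {a}, pmPartner hM x ∈ C \ {a} := by
      rintro x ⟨hxC, hxa⟩
      simp only [Set.mem_singleton_iff] at hxa
      have hxb : x ≠ b := fun h => hbC (h ▸ hxC)
      have hJadj : J.Adj x (pmPartner hM x) := by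
        rw [hJdef, SimpleGraph.deleteEdges_adj]
        refine ⟨pmPartner_gadj hM x, ?_⟩
        simp only [Set.mem_singleton_iff, Sym2.eq_iff]
        rintro (⟨h1, h2⟩ | ⟨h1, h2⟩)
        · exact hxa h1
        · exact hxb h1
      refine ⟨(hJadj.symm.reachable).trans hxC, ?_⟩
      simp only [Set.mem_singleton_iff]
      intro h
      have : x = pmPartner hM a := by
        rw [← h, pmPartner_invol]
      rw [hpa] at this
      exact hxb this
    have even2 : Even (C \ {a}).ncard :=
      even_ncard_closed (pmPartner hM) _ _ rfl hC_M
        (fun x _ => pmPartner_invol hM x) (fun x _ => pmPartner_ne hM x)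
    have hcc : (C \ {a}).ncard = C.ncard - 1 := by
      rw [Set.ncard_diff_singleton_of_mem haC]
    have h1c : 1 ≤ C.ncard := (Set.ncard_pos (Set.toFinite _)).mpr ⟨a, haC⟩
    rw [Nat.even_iff] at even1 even2
    omega
  have : Nonempty V := hconn.nonempty
  rw [SimpleGraph.connected_iff]
  refine ⟨fun x y => ?_, this⟩
  obtain ⟨w⟩ := hconn.preconnected x y
  rcases reach_cases (a := a) (b := b) w with r | ⟨r1, r2⟩ | ⟨r1, r2⟩
  · exact r
  · exact r1.trans (key.trans r2)
  · exact r1.trans (key.symm.trans r2)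

end DeletedEdge2
section TightCut

variable {V : Type*} [Fintype V] {J : SimpleGraph V} {A B : Set V}

lemma cutEdges_compl (J : SimpleGraph V) (X : Set V) : cutEdges J Xᶜ = cutEdges J X := by
  ext g
  constructor
  · rintro ⟨hg, u, v, rfl, hu, hv⟩
    exact ⟨hg, v, u, Sym2.eq_swap, not_not.mp hv, hu⟩
  · rintro ⟨hg, u, v, rfl, hu, hv⟩
    exact ⟨hg, v, u, Sym2.eq_swap, hv, not_not.mpr hu⟩

lemma isTightCut_compl {X : Set V} (ht : IsTightCut J X) : IsTightCut J Xᶜ := by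
  intro M hM
  rw [cutEdges_compl]
  exact ht M hM

lemma not_trivial_compl {X : Set V} (hnt : ¬ IsTrivialShore X) : ¬ IsTrivialShore Xᶜ := by
  intro h
  rcases h with ⟨v, hv⟩ | ⟨v, hv⟩
  · exact hnt (Or.inr ⟨v, hv⟩)
  · rw [compl_compl] at hv
    exact hnt (Or.inl ⟨v, hv⟩)

lemma get_cross {X : Set V} (ht : IsTightCut J X) (M : J.Subgraph)
    (hM : M.IsPerfectMatching) :
    ∃ u₀ v₀ : V, u₀ ∈ X ∧ v₀ ∉ X ∧ M.Adj u₀ v₀ ∧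
      M.edgeSet ∩ cutEdges J X = {s(u₀, v₀)} := by
  obtain ⟨g₀, hg₀⟩ := Set.ncard_eq_one.mp (ht M hM)
  have hmem : g₀ ∈ M.edgeSet ∩ cutEdges J X := by rw [hg₀]; rfl
  obtain ⟨hg₀M, _, u, v, rfl, hu, hv⟩ := hmem
  exact ⟨u, v, hu, hv, pm_adj_of_edge_mem hg₀M, hg₀⟩

lemma cross_count (hbipJ : IsBipartition J A B) {X : Set V}
    {M : J.Subgraph} (hM : M.IsPerfectMatching) {u₀ v₀ : V}
    (hu₀ : u₀ ∈ X) (hv₀ : v₀ ∉ X) (hadj : M.Adj u₀ v₀)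
    (hint : M.edgeSet ∩ cutEdges J X = {s(u₀, v₀)}) :
    (u₀ ∈ A ∧ (X ∩ A).ncard = (X ∩ B).ncard + 1) ∨
    (u₀ ∈ B ∧ (X ∩ B).ncard = (X ∩ A).ncard + 1) := by
  set p := pmPartner hM with hp
  have hpu₀ : p u₀ = v₀ := pmPartner_eq_of_adj hM hadj
  have hclose1 : ∀ x ∈ X, x ≠ u₀ → p x ∈ X := by
    intro x hx hxu
    by_contra hpx
    have hmem : s(x, p x) ∈ M.edgeSet ∩ cutEdges J X :=
      ⟨pm_edge_mem hM (pmPartner_adj hM x),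
        pmPartner_gadj hM x, x, p x, rfl, hx, hpx⟩
    rw [hint, Set.mem_singleton_iff, Sym2.eq_iff] at hmem
    rcases hmem with ⟨h1, _⟩ | ⟨h1, _⟩
    · exact hxu h1
    · exact hv₀ (h1 ▸ hx)
  have hclose2 : ∀ y, y ∉ X → y ≠ v₀ → p y ∉ X := by
    intro y hy hyv hpy
    have hmem : s(p y, y) ∈ M.edgeSet ∩ cutEdges J X :=
      ⟨pm_edge_mem hM (pmPartner_adj hM y).symm,
        (pmPartner_gadj hM y).symm, p y, y, rfl, hpy, hy⟩
    rw [hint, Set.mem_singleton_iff, Sym2.eq_iff] at hmem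
    rcases hmem with ⟨_, h2⟩ | ⟨_, h2⟩
    · exact hyv h2
    · exact hy (h2 ▸ hu₀)
  have hinj : Set.InjOn p ((X ∩ A) \ {u₀}) := fun x _ y _ h => pmPartner_inj hM h
  have himg : p '' ((X ∩ A) \ {u₀}) = (X ∩ B) \ {u₀} := by
    apply Set.Subset.antisymm
    · rintro y ⟨x, ⟨⟨hxX, hxA⟩, hxu⟩, rfl⟩
      simp only [Set.mem_singleton_iff] at hxu
      refine ⟨⟨hclose1 x hxX hxu, hbipJ.mem_B_of_adj hxA (pmPartner_gadj hM x)⟩, ?_⟩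
      simp only [Set.mem_singleton_iff]
      intro h
      apply hv₀
      rw [← hpu₀, ← h, hp, pmPartner_invol]
      exact hxX
    · rintro y ⟨⟨hyX, hyB⟩, hyu⟩
      simp only [Set.mem_singleton_iff] at hyu
      refine ⟨p y, ⟨⟨hclose1 y hyX hyu, hbipJ.symm.mem_B_of_adj hyB (pmPartner_gadj hM y)⟩, ?_⟩,
        pmPartner_invol hM y⟩
      simp only [Set.mem_singleton_iff]
      intro h
      apply hv₀
      rw [← hpu₀, ← h, hp, pmPartner_invol]
      exact hyX
  have hcnt : ((X ∩ A) \ {u₀}).ncard = ((X ∩ B) \ {u₀}).ncard := by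
    rw [← himg, Set.ncard_image_of_injOn hinj]
  rcases hbipJ.mem_or u₀ with huA | huB
  · left
    refine ⟨huA, ?_⟩
    have h1 : ((X ∩ A) \ {u₀}).ncard = (X ∩ A).ncard - 1 :=
      Set.ncard_diff_singleton_of_mem ⟨hu₀, huA⟩
    have h2 : (X ∩ B) \ {u₀} = X ∩ B :=
      Set.diff_singleton_eq_self (fun h => hbipJ.not_mem_B huA h.2)
    have h3 : 1 ≤ (X ∩ A).ncard := (Set.ncard_pos (Set.toFinite _)).mpr ⟨u₀, hu₀, huA⟩
    rw [h1, h2] at hcnt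
    omega
  · right
    refine ⟨huB, ?_⟩
    have h1 : ((X ∩ B) \ {u₀}).ncard = (X ∩ B).ncard - 1 :=
      Set.ncard_diff_singleton_of_mem ⟨hu₀, huB⟩
    have h2 : (X ∩ A) \ {u₀} = X ∩ A :=
      Set.diff_singleton_eq_self (fun h => hbipJ.not_mem_B h.2 huB)
    have h3 : 1 ≤ (X ∩ B).ncard := (Set.ncard_pos (Set.toFinite _)).mpr ⟨u₀, hu₀, huB⟩
    rw [h1, h2] at hcnt
    omega

end TightCut
section TightCut2

variable {V : Type*} [Fintype V] {J : SimpleGraph V} {A B : Set V}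

lemma tight_structure_aux (hbipJ : IsBipartition J A B) (hcardAB : A.ncard = B.ncard)
    (hmcJ : ∀ g ∈ J.edgeSet, ∃ M : J.Subgraph, M.IsPerfectMatching ∧ g ∈ M.edgeSet)
    {X : Set V} (ht : IsTightCut J X) (hnt : ¬ IsTrivialShore X)
    (hsz : (X ∩ A).ncard = (X ∩ B).ncard + 1) :
    ∃ SA SB : Set V, SA ⊆ A ∧ SB ⊆ B ∧ SA.Nonempty ∧ SB.Nonempty ∧
      SA.ncard + SB.ncard + 1 = A.ncard ∧
      setNbhd J SB ⊆ A \ SA ∧ setNbhd J SA ⊆ B \ SB ∧ A \ SA = X ∩ A := by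
  -- every crossing edge has its X-end in A
  have hcrossA : ∀ (M : J.Subgraph) (hM : M.IsPerfectMatching) (u₀ v₀ : V),
      u₀ ∈ X → v₀ ∉ X → M.Adj u₀ v₀ →
      M.edgeSet ∩ cutEdges J X = {s(u₀, v₀)} → u₀ ∈ A := by
    intro M hM u₀ v₀ hu₀ hv₀ hadj hint
    rcases cross_count hbipJ hM hu₀ hv₀ hadj hint with ⟨h, _⟩ | ⟨_, h⟩
    · exact h
    · omega
  have hBnocross : ∀ u ∈ X ∩ B, ∀ v, v ∉ X → ¬ J.Adj u v := by
    rintro u ⟨huX, huB⟩ v hv hadj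
    obtain ⟨M, hM, hgM⟩ := hmcJ s(u, v) ((SimpleGraph.mem_edgeSet _).mpr hadj)
    obtain ⟨u₀, v₀, hu₀, hv₀, hadj₀, hint⟩ := get_cross ht M hM
    have huA := hcrossA M hM u₀ v₀ hu₀ hv₀ hadj₀ hint
    have hmem : s(u, v) ∈ M.edgeSet ∩ cutEdges J X := ⟨hgM, hadj, u, v, rfl, huX, hv⟩
    rw [hint, Set.mem_singleton_iff, Sym2.eq_iff] at hmem
    rcases hmem with ⟨h1, _⟩ | ⟨h1, h2⟩
    · exact hbipJ.not_mem_B (h1 ▸ huA) huB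
    · exact hv₀ (h1 ▸ huX)
  set SA := Xᶜ ∩ A with hSA
  set SB := X ∩ B with hSB
  have hXAeq : A \ SA = X ∩ A := by
    ext z
    simp only [hSA, Set.mem_diff, Set.mem_inter_iff, Set.mem_compl_iff]
    tauto
  have hSAeq : SA = A \ (X ∩ A) := by
    ext z
    simp only [hSA, Set.mem_diff, Set.mem_inter_iff, Set.mem_compl_iff]
    tauto
  have hSBsub : SB ⊆ B := Set.inter_subset_right
  have hSAsub : SA ⊆ A := Set.inter_subset_right
  -- SB nonempty
  have hSBne : SB.Nonempty := by
    rw [Set.nonempty_iff_ne_empty]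
    intro hempty
    have hXA1 : (X ∩ A).ncard = 1 := by
      rw [hsz, hempty, Set.ncard_empty]
    obtain ⟨x, hx⟩ := Set.ncard_eq_one.mp hXA1
    apply hnt
    left
    refine ⟨x, ?_⟩
    ext z
    constructor
    · intro hz
      rcases hbipJ.mem_or z with hzA | hzB
      · have : z ∈ X ∩ A := ⟨hz, hzA⟩
        rw [hx] at this
        exact this
      · exfalso
        have : z ∈ SB := ⟨hz, hzB⟩
        rw [hempty] at this
        exact this
    · intro hz
      have : x ∈ X ∩ A := by rw [hx]; rfl
      exact hz ▸ this.1
  -- SA nonempty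
  have hSAne : SA.Nonempty := by
    rw [Set.nonempty_iff_ne_empty]
    intro hempty
    have hXA : X ∩ A = A := by
      rw [hSAeq] at hempty
      exact Set.Subset.antisymm Set.inter_subset_right (Set.diff_eq_empty.mp hempty)
    have hXB : SB.ncard = A.ncard - 1 := by rw [hXA] at hsz; omega
    have hA1' : 1 ≤ A.ncard := by rw [hXA] at hsz; omega
    have hcompl : Xᶜ = B \ SB := by
      ext z
      simp only [Set.mem_compl_iff, Set.mem_diff, hSB, Set.mem_inter_iff]
      constructor
      · intro hz
        rcases hbipJ.mem_or z with hzA | hzB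
        · exfalso
          apply hz
          have h' : z ∈ X ∩ A := by rw [hXA]; exact hzA
          exact h'.1
        · exact ⟨hzB, fun h => hz h.1⟩
      · rintro ⟨hzB, hzSB⟩ hzX
        exact hzSB ⟨hzX, hzB⟩
    have hXc1 : Xᶜ.ncard = 1 := by
      rw [hcompl, Set.ncard_diff hSBsub, hXB, ← hcardAB]
      omega
    apply hnt
    right
    exact Set.ncard_eq_one.mp hXc1
  refine ⟨SA, SB, hSAsub, hSBsub, hSAne, hSBne, ?_, ?_, ?_, hXAeq⟩
  · -- sizes
    have h1 : SA.ncard = A.ncard - (X ∩ A).ncard := by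
      rw [hSAeq, Set.ncard_diff Set.inter_subset_right]
    have h2 : (X ∩ A).ncard ≤ A.ncard :=
      Set.ncard_le_ncard Set.inter_subset_right (Set.toFinite _)
    have h3 : 1 ≤ (X ∩ A).ncard := by rw [hsz]; omega
    omega
  · -- setNbhd J SB ⊆ A \ SA
    rintro y ⟨z, hz, hadj⟩
    have hyA : y ∈ A := hbipJ.symm.mem_B_of_adj (hSBsub hz) hadj
    have hyX : y ∈ X := by
      by_contra hy
      exact hBnocross z hz y hy hadj
    rw [hXAeq]
    exact ⟨hyX, hyA⟩
  · -- setNbhd J SA ⊆ B \ SB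
    rintro y ⟨z, hz, hadj⟩
    have hyB : y ∈ B := hbipJ.mem_B_of_adj (hSAsub hz) hadj
    refine ⟨hyB, ?_⟩
    intro hySB
    exact hBnocross y hySB z (fun h => hz.1 h) hadj.symm

lemma tight_structure (hbipJ : IsBipartition J A B) (hcardAB : A.ncard = B.ncard)
    (hmcJ : ∀ g ∈ J.edgeSet, ∃ M : J.Subgraph, M.IsPerfectMatching ∧ g ∈ M.edgeSet)
    (hpm : ∃ M : J.Subgraph, M.IsPerfectMatching)
    {X : Set V} (ht : IsTightCut J X) (hnt : ¬ IsTrivialShore X) :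
    ∃ SA SB : Set V, SA ⊆ A ∧ SB ⊆ B ∧ SA.Nonempty ∧ SB.Nonempty ∧
      SA.ncard + SB.ncard + 1 = A.ncard ∧
      setNbhd J SB ⊆ A \ SA ∧ setNbhd J SA ⊆ B \ SB := by
  obtain ⟨M, hM⟩ := hpm
  obtain ⟨u₀, v₀, hu₀, hv₀, hadj, hint⟩ := get_cross ht M hM
  rcases cross_count hbipJ hM hu₀ hv₀ hadj hint with ⟨_, hsz⟩ | ⟨_, hsz⟩
  · obtain ⟨SA, SB, h1, h2, h3, h4, h5, h6, h7, _⟩ :=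
      tight_structure_aux hbipJ hcardAB hmcJ ht hnt hsz
    exact ⟨SA, SB, h1, h2, h3, h4, h5, h6, h7⟩
  · -- pass to the complement
    have hsz' : (Xᶜ ∩ A).ncard = (Xᶜ ∩ B).ncard + 1 := by
      have e1 : Xᶜ ∩ A = A \ (X ∩ A) := by
        ext z
        simp only [Set.mem_compl_iff, Set.mem_diff, Set.mem_inter_iff]
        tauto
      have e2 : Xᶜ ∩ B = B \ (X ∩ B) := by
        ext z
        simp only [Set.mem_compl_iff, Set.mem_diff, Set.mem_inter_iff]
        tauto
      have l1 : (X ∩ A).ncard ≤ A.ncard :=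
        Set.ncard_le_ncard Set.inter_subset_right (Set.toFinite _)
      have l2 : (X ∩ B).ncard ≤ B.ncard :=
        Set.ncard_le_ncard Set.inter_subset_right (Set.toFinite _)
      rw [e1, e2, Set.ncard_diff Set.inter_subset_right,
        Set.ncard_diff Set.inter_subset_right]
      omega
    obtain ⟨SA, SB, h1, h2, h3, h4, h5, h6, h7, _⟩ :=
      tight_structure_aux hbipJ hcardAB hmcJ (isTightCut_compl ht)
        (not_trivial_compl hnt) hsz'
    exact ⟨SA, SB, h1, h2, h3, h4, h5, h6, h7⟩

end TightCut2
section Single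

variable {V : Type*}

lemma setNbhd_singleton (G : SimpleGraph V) (y : V) :
    setNbhd G {y} = G.neighborSet y := by
  ext z
  simp only [setNbhd, Set.mem_setOf_eq, Set.mem_singleton_iff, SimpleGraph.mem_neighborSet]
  constructor
  · rintro ⟨w, rfl, h⟩; exact h
  · intro h; exact ⟨y, rfl, h⟩

lemma ncard_image_lt_of_collision {W : Type*} [Finite V] {S : Set V} {fm : V → W}
    {x y : V} (hx : x ∈ S) (hy : y ∈ S) (hne : x ≠ y) (heq : fm x = fm y) :
    (fm '' S).ncard ≤ S.ncard - 1 := by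
  have himg : fm '' S = fm '' (S \ {x}) := by
    apply Set.Subset.antisymm
    · rintro z ⟨u, hu, rfl⟩
      rcases eq_or_ne u x with rfl | hux
      · exact ⟨y, ⟨hy, fun h => hne (Set.mem_singleton_iff.mp h).symm⟩, heq.symm⟩
      · exact ⟨u, ⟨hu, hux⟩, rfl⟩
    · exact Set.image_mono Set.diff_subset
  rw [himg]
  calc (fm '' (S \ {x})).ncard ≤ (S \ {x}).ncard := Set.ncard_image_le (Set.toFinite _)
    _ = S.ncard - 1 := Set.ncard_diff_singleton_of_mem hx

end Single

section MainCase

/-- Main case of Statement 13, with a bipartition of `G` chosen so that `b₀ ∈ B`. -/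
lemma main_case {V W : Type*} [Fintype V] (G : SimpleGraph V)
    (H : SimpleGraph W) (fm : V → W) (b₀ w : V) {A B : Set V}
    (hbip : IsBipartition G A B) (hb₀B : b₀ ∈ B)
    (hmin : IsMinimalBrace G)
    (hthin : IsStrictlyThinVia G s(b₀, w) H fm)
    (hb₀ : mdeg G b₀ = 3)
    (hidx : thinIndex (G.deleteEdges {s(b₀, w)}) = 1)
    (f : Sym2 W) (hf : IsSuperfluous H f)
    (f' : Sym2 V) (hf' : f' ∈ (G.deleteEdges {s(b₀, w)}).edgeSet)
    (hmap : Sym2.map fm f' = f) :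
    ∃ u v : V, f' = s(u, v) ∧
      IsOuterVertex (G.deleteEdges {s(b₀, w)}) v ∧ mdeg G v = 3 ∧ 4 ≤ mdeg G u := by
  classical
  obtain ⟨heG, ⟨hsurj, hfib, hadjH⟩, hbrH, hsimple⟩ := hthin
  haveI hFinW : Finite W := Finite.of_surjective fm hsurj
  set G' := G.deleteEdges {s(b₀, w)} with hG'def
  have hbrG := hmin.1
  obtain ⟨hbipG', hmcG, hntcG⟩ := hbrG
  obtain ⟨hconnG, hEneG, hmcG'⟩ := hmcG
  have hGadj : G.Adj b₀ w := (SimpleGraph.mem_edgeSet _).mp heG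
  have hbwne : b₀ ≠ w := hGadj.ne
  have hwA : w ∈ A := hbip.symm.mem_B_of_adj hb₀B hGadj
  -- neighbors of b₀ in G'
  have hNb' : G'.neighborSet b₀ = G.neighborSet b₀ \ {w} := by
    ext x
    simp only [SimpleGraph.mem_neighborSet, hG'def, SimpleGraph.deleteEdges_adj,
      Set.mem_diff, Set.mem_singleton_iff, Sym2.eq_iff]
    constructor
    · rintro ⟨h1, h2⟩
      exact ⟨h1, by tauto⟩
    · rintro ⟨h1, h2⟩
      exact ⟨h1, by tauto⟩
  have hwNb : w ∈ G.neighborSet b₀ := hGadj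
  have hNb'card : (G'.neighborSet b₀).ncard = 2 := by
    rw [hNb', Set.ncard_diff_singleton_of_mem hwNb]
    have : (G.neighborSet b₀).ncard = 3 := hb₀
    omega
  obtain ⟨v₁, v₂, hv12ne, hNb'eq⟩ := Set.ncard_eq_two.mp hNb'card
  have hv₁adj : G'.Adj b₀ v₁ := by
    have : v₁ ∈ G'.neighborSet b₀ := by rw [hNb'eq]; left; rfl
    exact this
  have hv₂adj : G'.Adj b₀ v₂ := by
    have : v₂ ∈ G'.neighborSet b₀ := by rw [hNb'eq]; right; rfl
    exact this
  have hv₁Gadj : G.Adj b₀ v₁ := ((SimpleGraph.deleteEdges_adj).mp hv₁adj).1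
  have hv₂Gadj : G.Adj b₀ v₂ := ((SimpleGraph.deleteEdges_adj).mp hv₂adj).1
  have hv₁A : v₁ ∈ A := hbip.symm.mem_B_of_adj hb₀B hv₁Gadj
  have hv₂A : v₂ ∈ A := hbip.symm.mem_B_of_adj hb₀B hv₂Gadj
  have hv₁w : v₁ ≠ w := by
    have : v₁ ∈ G.neighborSet b₀ \ {w} := by rw [← hNb']; rw [hNb'eq]; left; rfl
    exact fun h => this.2 h
  have hv₂w : v₂ ≠ w := by
    have : v₂ ∈ G.neighborSet b₀ \ {w} := by rw [← hNb']; rw [hNb'eq]; right; rfl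
    exact fun h => this.2 h
  have hv₁b₀ : v₁ ≠ b₀ := fun h => hbip.not_mem_B (h ▸ hv₁A) hb₀B
  have hv₂b₀ : v₂ ≠ b₀ := fun h => hbip.not_mem_B (h ▸ hv₂A) hb₀B
  -- b₀ is the unique degree-2 vertex of G'
  have hinner : mdeg G' b₀ = 2 := hNb'card
  have hdeg2 : ∀ z : V, mdeg G' z = 2 → z = b₀ := by
    intro z hz
    obtain ⟨x, hx⟩ := Set.ncard_eq_one.mp hidx
    have hb₀x : b₀ ∈ {v : V | mdeg G' v = 2} := hinner
    have hzx : z ∈ {v : V | mdeg G' v = 2} := hz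
    rw [hx] at hb₀x hzx
    rw [Set.mem_singleton_iff] at hb₀x hzx
    rw [hzx, hb₀x]
  -- the fibers of fm
  set gad : Set V := {b₀, v₁, v₂} with hgad
  have hfib' : ∀ u v : V, fm u = fm v ↔ (u = v ∨ (u ∈ gad ∧ v ∈ gad)) := by
    intro u v
    rw [hfib u v]
    constructor
    · rintro (rfl | ⟨v₀, hv₀, hu, hv⟩)
      · exact Or.inl rfl
      · right
        have hv₀b : v₀ = b₀ := hdeg2 v₀ hv₀
        subst hv₀b
        have hins : insert v₀ (G'.neighborSet v₀) = gad := by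
          rw [hNb'eq]
        rw [hins] at hu hv
        exact ⟨hu, hv⟩
    · rintro (rfl | ⟨hu, hv⟩)
      · exact Or.inl rfl
      · right
        refine ⟨b₀, hinner, ?_, ?_⟩
        · rw [hNb'eq]; exact hu
        · rw [hNb'eq]; exact hv
  have hfmb₀v₁ : fm b₀ = fm v₁ := (hfib' _ _).mpr (Or.inr ⟨Or.inl rfl, Or.inr (Or.inl rfl)⟩)
  have hfmb₀v₂ : fm b₀ = fm v₂ := (hfib' _ _).mpr (Or.inr ⟨Or.inl rfl, Or.inr (Or.inr rfl)⟩)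
  -- bipartition of H
  set AH : Set W := fm '' A with hAH
  set BH : Set W := fm '' (B \ {b₀}) with hBH
  have hgadA : ∀ z ∈ gad, z ∈ A ∨ z = b₀ := by
    intro z hz
    rcases hz with rfl | rfl | rfl
    · exact Or.inr rfl
    · exact Or.inl hv₁A
    · exact Or.inl hv₂A
  have hbipH : IsBipartition H AH BH := by
    refine ⟨?_, ?_, ?_⟩
    · ext x
      simp only [Set.mem_union, Set.mem_univ, iff_true]
      obtain ⟨u, rfl⟩ := hsurj x
      rcases hbip.mem_or u with huA | huB
      · exact Or.inl ⟨u, huA, rfl⟩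
      · rcases eq_or_ne u b₀ with rfl | hub
        · exact Or.inl ⟨v₁, hv₁A, hfmb₀v₁.symm⟩
        · exact Or.inr ⟨u, ⟨huB, hub⟩, rfl⟩
    · ext x
      simp only [Set.mem_inter_iff, Set.mem_empty_iff_false, iff_false]
      rintro ⟨⟨u, huA, rfl⟩, ⟨v, ⟨hvB, hvb⟩, hveq⟩⟩
      have huv : u ≠ v := fun h => hbip.not_mem_B huA (h ▸ hvB)
      rcases (hfib' v u).mp hveq with h | ⟨hv, hu⟩
      · exact huv h.symm
      · rcases hgadA v hv with h | h
        · exact hbip.not_mem_B h hvB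
        · exact hvb h
    · intro x y hxy
      rw [hadjH x y] at hxy
      obtain ⟨hne, u, v, huv, rfl, rfl⟩ := hxy
      have hGuv : G.Adj u v := ((SimpleGraph.deleteEdges_adj).mp huv).1
      have key : ∀ u' v' : V, G'.Adj u' v' → u' ∈ A → fm u' ≠ fm v' →
          fm u' ∈ AH ∧ fm v' ∈ BH := by
        intro u' v' huv' huA' hne'
        have hvB' : v' ∈ B := hbip.mem_B_of_adj huA' ((SimpleGraph.deleteEdges_adj).mp huv').1
        refine ⟨⟨u', huA', rfl⟩, ⟨v', ⟨hvB', ?_⟩, rfl⟩⟩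
        intro hvb₀
        have hmem : u' ∈ G'.neighborSet b₀ := by rw [← hvb₀]; exact huv'.symm
        rw [hNb'eq] at hmem
        apply hne'
        rw [hvb₀]
        rcases hmem with rfl | rfl
        · exact hfmb₀v₁.symm
        · exact hfmb₀v₂.symm
      rcases hbip.mem_or u with huA | huB
      · exact Or.inl (key u v huv huA hne)
      · have hvA : v ∈ A := hbip.symm.mem_B_of_adj huB hGuv
        have := key v u huv.symm hvA (Ne.symm hne)
        exact Or.inr ⟨this.2, this.1⟩
  -- cardinalities of the color classes
  have hinjA : Set.InjOn fm (A \ {v₂}) := by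
    rintro u ⟨huA, huv₂⟩ v ⟨hvA, hvv₂⟩ heq
    rcases (hfib' u v).mp heq with h | ⟨hu, hv⟩
    · exact h
    · have hu' : u = v₁ := by
        rcases hgadA u hu with h | h
        · rcases hu with rfl | rfl | rfl
          · exact absurd h (fun h' => hbip.not_mem_B h' hb₀B)
          · rfl
          · exact absurd rfl huv₂
        · exact absurd (h ▸ huA) (fun h' => hbip.not_mem_B h' hb₀B)
      have hv' : v = v₁ := by
        rcases hgadA v hv with h | h
        · rcases hv with rfl | rfl | rfl
          · exact absurd h (fun h' => hbip.not_mem_B h' hb₀B)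
          · rfl
          · exact absurd rfl hvv₂
        · exact absurd (h ▸ hvA) (fun h' => hbip.not_mem_B h' hb₀B)
      rw [hu', hv']
  have hAHeq : AH = fm '' (A \ {v₂}) := by
    apply Set.Subset.antisymm
    · rintro x ⟨u, huA, rfl⟩
      rcases eq_or_ne u v₂ with rfl | huv₂
      · exact ⟨v₁, ⟨hv₁A, fun h => hv12ne h⟩, (hfmb₀v₁.symm.trans hfmb₀v₂)⟩
      · exact ⟨u, ⟨huA, huv₂⟩, rfl⟩
    · exact Set.image_mono Set.diff_subset
  have hinjB : Set.InjOn fm (B \ {b₀}) := by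
    rintro u ⟨huB, hub⟩ v ⟨hvB, hvb⟩ heq
    rcases (hfib' u v).mp heq with h | ⟨hu, hv⟩
    · exact h
    · exfalso
      rcases hgadA u hu with h | h
      · exact hbip.not_mem_B h huB
      · exact hub h
  have hv₂A' : v₂ ∈ A := hv₂A
  have hAHcard : AH.ncard = A.ncard - 1 := by
    rw [hAHeq, Set.ncard_image_of_injOn hinjA, Set.ncard_diff_singleton_of_mem hv₂A']
  have hBHcard : BH.ncard = B.ncard - 1 := by
    rw [hBH, Set.ncard_image_of_injOn hinjB, Set.ncard_diff_singleton_of_mem hb₀B]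
  -- perfect matching of G and equal class sizes
  obtain ⟨g₀, hg₀⟩ := id hEneG
  obtain ⟨M₀, hM₀, _⟩ := hmcG' g₀ hg₀
  have hcardAB : A.ncard = B.ncard := class_ncard_eq hbip hM₀
  -- |A| ≥ 3
  have hwv : ({w, v₁, v₂} : Set V) ⊆ A := by
    rintro z (rfl | rfl | rfl)
    · exact hwA
    · exact hv₁A
    · exact hv₂A
  have hn3 : 3 ≤ A.ncard := by
    have h3 : ({w, v₁, v₂} : Set V).ncard = 3 := by
      rw [Set.ncard_insert_of_notMem (by simp [hv₁w.symm, hv₂w.symm] : w ∉ ({v₁, v₂} : Set V))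
        (Set.toFinite _), Set.ncard_pair hv12ne]
    calc 3 = ({w, v₁, v₂} : Set V).ncard := h3.symm
      _ ≤ A.ncard := Set.ncard_le_ncard hwv (Set.toFinite _)
  -- minimum degree of G is at least 3
  have hbrG' : IsBrace G := ⟨hbipG', ⟨hconnG, hEneG, hmcG'⟩, hntcG⟩
  have hminDeg : ∀ y : V, 3 ≤ (G.neighborSet y).ncard := by
    intro y
    rcases hbip.mem_or y with hyA | hyB
    · have := brace_nbhd_ge hbip hbrG' (by simpa using hyA : ({y} : Set V) ⊆ A)
        (Set.singleton_nonempty y) (by rw [Set.ncard_singleton]; omega)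
      rwa [setNbhd_singleton, Set.ncard_singleton] at this
    · have := brace_nbhd_ge hbip.symm hbrG' (by simpa using hyB : ({y} : Set V) ⊆ B)
        (Set.singleton_nonempty y) (by rw [Set.ncard_singleton]; omega)
      rwa [setNbhd_singleton, Set.ncard_singleton] at this
  -- the two ends of f'
  obtain ⟨a, b, hab, haA, hbB⟩ : ∃ a b : V, f' = s(a, b) ∧ a ∈ A ∧ b ∈ B := by
    obtain ⟨x, y, rfl⟩ : ∃ x y : V, f' = s(x, y) := by
      induction f' using Sym2.ind with | _ x y => exact ⟨x, y, rfl⟩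
    have hadj' : G'.Adj x y := (SimpleGraph.mem_edgeSet _).mp hf'
    have hGxy : G.Adj x y := ((SimpleGraph.deleteEdges_adj).mp hadj').1
    rcases hbip.mem_or x with hxA | hxB
    · exact ⟨x, y, rfl, hxA, hbip.mem_B_of_adj hxA hGxy⟩
    · exact ⟨y, x, Sym2.eq_swap, hbip.symm.mem_B_of_adj hxB hGxy, hxB⟩
  subst hab
  have hadjab : G'.Adj a b := (SimpleGraph.mem_edgeSet _).mp hf'
  have hGab : G.Adj a b := ((SimpleGraph.deleteEdges_adj).mp hadjab).1
  have hfeq : f = s(fm a, fm b) := by rw [← hmap, Sym2.map_pair_eq]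
  have hfH : f ∈ H.edgeSet := hf.1
  have hHadjf : H.Adj (fm a) (fm b) := by
    rw [hfeq] at hfH
    exact (SimpleGraph.mem_edgeSet _).mp hfH
  have hfmab : fm a ≠ fm b := hHadjf.ne
  have hbb₀ : b ≠ b₀ := by
    intro h
    have hmem : a ∈ G'.neighborSet b₀ := by rw [← h]; exact hadjab.symm
    rw [hNb'eq] at hmem
    apply hfmab
    rw [h]
    rcases hmem with rfl | rfl
    · exact hfmb₀v₁.symm
    · exact hfmb₀v₂.symm
  have hab₀ : a ≠ b₀ := fun h => hbip.not_mem_B (h ▸ haA) hb₀B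
  have hbw : b ≠ w := fun h => hbip.not_mem_B hwA (h ▸ hbB)
  have hbv₁ : b ≠ v₁ := fun h => hbip.not_mem_B (h ▸ hv₁A) hbB
  have hbv₂ : b ≠ v₂ := fun h => hbip.not_mem_B (h ▸ hv₂A) hbB
  -- setting up J = G - f'
  set J := G.deleteEdges {s(a, b)} with hJdef
  have hf'G : s(a, b) ∈ G.edgeSet := (SimpleGraph.mem_edgeSet _).mpr hGab
  have hnotbrJ : ¬ IsBrace J := hmin.2 _ hf'G
  have hbipJ : IsBipartition J A B := bip_deleteEdges hbip _
  have hmcJ := deleted_mc hbip hbrG' hcardAB hn3 hminDeg haA hbB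
  have hJb₀v₁ : J.Adj b₀ v₁ := by
    rw [hJdef, SimpleGraph.deleteEdges_adj]
    refine ⟨hv₁Gadj, ?_⟩
    simp only [Set.mem_singleton_iff, Sym2.eq_iff]
    rintro (⟨h1, _⟩ | ⟨h1, _⟩)
    · exact hab₀ h1.symm
    · exact hbb₀ h1.symm
  obtain ⟨N₀, hN₀, _⟩ := hmcJ s(b₀, v₁) ((SimpleGraph.mem_edgeSet _).mpr hJb₀v₁)
  obtain ⟨MG, hMG, hMGf⟩ := hmcG' s(a, b) hf'G
  have hconnJ : J.Connected := deleted_connected hconnG hN₀ hMG hMGf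
  have hXex : ∃ X : Set V, IsTightCut J X ∧ ¬ IsTrivialShore X := by
    by_contra hcon
    push_neg at hcon
    exact hnotbrJ ⟨⟨A, B, hbipJ⟩,
      ⟨hconnJ, ⟨_, (SimpleGraph.mem_edgeSet _).mpr hJb₀v₁⟩, hmcJ⟩,
      fun X hX => hcon X hX⟩
  obtain ⟨X, htX, hntX⟩ := hXex
  obtain ⟨SA, SB, hSAA, hSBB, hSAne, hSBne, hsizes, hNSB, hNSA⟩ :=
    tight_structure hbipJ hcardAB hmcJ ⟨N₀, hN₀⟩ htX hntX
  -- E1: exact deficiency equalities, and a ∈ SA, b ∈ SB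
  have hSA1 : 1 ≤ SA.ncard := (Set.ncard_pos (Set.toFinite _)).mpr hSAne
  have hSB1 : 1 ≤ SB.ncard := (Set.ncard_pos (Set.toFinite _)).mpr hSBne
  have hNJA_le : (setNbhd J SA).ncard ≤ SA.ncard + 1 := by
    have h1 := Set.ncard_le_ncard hNSA (Set.toFinite (B \ SB))
    rw [Set.ncard_diff hSBB] at h1
    omega
  have hNJB_le : (setNbhd J SB).ncard ≤ SB.ncard + 1 := by
    have h1 := Set.ncard_le_ncard hNSB (Set.toFinite (A \ SA))
    rw [Set.ncard_diff hSAA] at h1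
    omega
  have hGA : SA.ncard + 2 ≤ (setNbhd G SA).ncard :=
    brace_nbhd_ge hbip hbrG' hSAA hSAne (by omega)
  have hGB : SB.ncard + 2 ≤ (setNbhd G SB).ncard :=
    brace_nbhd_ge hbip.symm hbrG' hSBB hSBne (by rw [← hcardAB]; omega)
  have hdropA : setNbhd G SA ⊆ insert b (setNbhd J SA) := by
    rintro y ⟨z, hz, hadj⟩
    by_cases hedge : s(z, y) = s(a, b)
    · rw [Sym2.eq_iff] at hedge
      rcases hedge with ⟨h1, h2⟩ | ⟨h1, h2⟩
      · exact Or.inl h2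
      · exact absurd (h1 ▸ hSAA hz) (fun h => hbip.not_mem_B h hbB)
    · right
      exact ⟨z, hz, by rw [hJdef, SimpleGraph.deleteEdges_adj]; exact ⟨hadj, by simpa using hedge⟩⟩
  have hdropB : setNbhd G SB ⊆ insert a (setNbhd J SB) := by
    rintro y ⟨z, hz, hadj⟩
    by_cases hedge : s(z, y) = s(a, b)
    · rw [Sym2.eq_iff] at hedge
      rcases hedge with ⟨h1, h2⟩ | ⟨h1, h2⟩
      · exact absurd haA (fun h => hbip.not_mem_B (h1 ▸ h) (hSBB hz))
      · exact Or.inl h2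
    · right
      exact ⟨z, hz, by rw [hJdef, SimpleGraph.deleteEdges_adj]; exact ⟨hadj, by simpa using hedge⟩⟩
  have hNGA_le : (setNbhd G SA).ncard ≤ (setNbhd J SA).ncard + 1 := by
    have := Set.ncard_le_ncard hdropA (Set.toFinite _)
    have h2 := Set.ncard_insert_le b (setNbhd J SA)
    omega
  have hNGB_le : (setNbhd G SB).ncard ≤ (setNbhd J SB).ncard + 1 := by
    have := Set.ncard_le_ncard hdropB (Set.toFinite _)
    have h2 := Set.ncard_insert_le a (setNbhd J SB)
    omega
  have hNJA_eq : (setNbhd J SA).ncard = SA.ncard + 1 := by omega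
  have hNJB_eq : (setNbhd J SB).ncard = SB.ncard + 1 := by omega
  have haSA : a ∈ SA := by
    by_contra haSA
    have hsub : setNbhd G SA ⊆ setNbhd J SA := by
      rintro y ⟨z, hz, hadj⟩
      refine ⟨z, hz, ?_⟩
      rw [hJdef, SimpleGraph.deleteEdges_adj]
      refine ⟨hadj, ?_⟩
      simp only [Set.mem_singleton_iff, Sym2.eq_iff]
      rintro (⟨h1, h2⟩ | ⟨h1, h2⟩)
      · exact haSA (h1 ▸ hz)
      · exact hbip.not_mem_B (h1 ▸ hSAA hz) hbB
    have := Set.ncard_le_ncard hsub (Set.toFinite _)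
    omega
  have hbSB : b ∈ SB := by
    by_contra hbSB
    have hsub : setNbhd G SB ⊆ setNbhd J SB := by
      rintro y ⟨z, hz, hadj⟩
      refine ⟨z, hz, ?_⟩
      rw [hJdef, SimpleGraph.deleteEdges_adj]
      refine ⟨hadj, ?_⟩
      simp only [Set.mem_singleton_iff, Sym2.eq_iff]
      rintro (⟨h1, h2⟩ | ⟨h1, h2⟩)
      · exact hbip.not_mem_B haA (h1 ▸ hSBB hz)
      · exact hbSB (h1 ▸ hz)
    have := Set.ncard_le_ncard hsub (Set.toFinite _)
    omega
  have hNJBset : setNbhd J SB = A \ SA := by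
    refine Set.eq_of_subset_of_ncard_le hNSB ?_ (Set.toFinite _)
    rw [Set.ncard_diff hSAA, hNJB_eq]
    omega
  -- projection machinery
  haveI : Fintype W := Fintype.ofFinite W
  have hinj_disj : ∀ S : Set V, S ∩ gad = ∅ → Set.InjOn fm S := by
    intro S hdisj u hu v hv heq
    rcases (hfib' u v).mp heq with h | ⟨h1, h2⟩
    · exact h
    · exfalso
      have hmem' : u ∈ S ∩ gad := ⟨hu, h1⟩
      rw [hdisj] at hmem'
      exact hmem'
  have hproj : ∀ S : Set V, S ∩ gad = ∅ →
      setNbhd (H.deleteEdges {f}) (fm '' S) ⊆ fm '' (setNbhd J S) := by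
    rintro S hdisj y ⟨t, ⟨z, hzS, rfl⟩, hadjt⟩
    rw [SimpleGraph.deleteEdges_adj] at hadjt
    obtain ⟨hadjH', hynef⟩ := hadjt
    rw [hadjH _ _] at hadjH'
    obtain ⟨hne, u, v, huv, hu, hvv⟩ := hadjH'
    have huz : u = z := by
      rcases (hfib' u z).mp hu with h | ⟨h1, h2⟩
      · exact h
      · exfalso
        have hmem' : z ∈ S ∩ gad := ⟨hzS, h2⟩
        rw [hdisj] at hmem'
        exact hmem'
    subst huz
    have hJzv : J.Adj u v := by
      rw [hJdef, SimpleGraph.deleteEdges_adj]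
      have hGzv : G.Adj u v := ((SimpleGraph.deleteEdges_adj).mp huv).1
      refine ⟨hGzv, ?_⟩
      simp only [Set.mem_singleton_iff]
      intro hedge
      apply hynef
      have hfv : f = s(fm u, fm v) := by rw [← hmap, ← hedge, Sym2.map_pair_eq]
      rw [Set.mem_singleton_iff, ← hu, hfv, hvv]
    exact ⟨v, ⟨u, hzS, hJzv⟩, hvv⟩
  have hbipHf : IsBipartition (H.deleteEdges {f}) AH BH := bip_deleteEdges hbipH {f}
  have hbrHf : IsBrace (H.deleteEdges {f}) := hf.2
  -- E2 : b₀ ∉ SB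
  have hb₀SB : b₀ ∉ SB := by
    intro hb₀SB
    have hwJ : J.Adj b₀ w := by
      rw [hJdef, SimpleGraph.deleteEdges_adj]
      refine ⟨hGadj, ?_⟩
      simp only [Set.mem_singleton_iff, Sym2.eq_iff]
      rintro (⟨h1, _⟩ | ⟨h1, _⟩)
      · exact hab₀ h1.symm
      · exact hbb₀ h1.symm
    have hv₂J : J.Adj b₀ v₂ := by
      rw [hJdef, SimpleGraph.deleteEdges_adj]
      refine ⟨hv₂Gadj, ?_⟩
      simp only [Set.mem_singleton_iff, Sym2.eq_iff]
      rintro (⟨h1, _⟩ | ⟨h1, _⟩)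
      · exact hab₀ h1.symm
      · exact hbb₀ h1.symm
    have hv₁SA : v₁ ∉ SA := fun h => (hNSB ⟨b₀, hb₀SB, hJb₀v₁⟩).2 h
    have hv₂SA : v₂ ∉ SA := fun h => (hNSB ⟨b₀, hb₀SB, hv₂J⟩).2 h
    have hdisjA : SA ∩ gad = ∅ := by
      ext z
      simp only [Set.mem_inter_iff, Set.mem_empty_iff_false, iff_false]
      rintro ⟨hzSA, (rfl | rfl | rfl)⟩
      · exact hbip.not_mem_B (hSAA hzSA) hb₀B
      · exact hv₁SA hzSA
      · exact hv₂SA hzSA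
    have hcardT : (fm '' SA).ncard = SA.ncard :=
      Set.ncard_image_of_injOn (hinj_disj SA hdisjA)
    have hbnd : (setNbhd (H.deleteEdges {f}) (fm '' SA)).ncard ≤ SA.ncard + 1 := by
      calc (setNbhd (H.deleteEdges {f}) (fm '' SA)).ncard
          ≤ (fm '' setNbhd J SA).ncard :=
            Set.ncard_le_ncard (hproj SA hdisjA) (Set.toFinite _)
        _ ≤ (setNbhd J SA).ncard := Set.ncard_image_le (Set.toFinite _)
        _ = SA.ncard + 1 := hNJA_eq
    have hch : ¬ (SA.ncard + 2 ≤ AH.ncard) := by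
      intro hle
      have := brace_nbhd_ge hbipHf hbrHf
        (by rw [hAH]; exact Set.image_mono hSAA : fm '' SA ⊆ AH)
        (hSAne.image fm) (by rw [hcardT]; exact hle)
      rw [hcardT] at this
      omega
    rw [hAHcard] at hch
    have hSB_eq1 : SB.ncard = 1 := by omega
    obtain ⟨x, hx⟩ := Set.ncard_eq_one.mp hSB_eq1
    have hbx : b = x := by rw [hx] at hbSB; exact hbSB
    have hb₀x : b₀ = x := by rw [hx] at hb₀SB; exact hb₀SB
    exact hbb₀ (hbx.trans hb₀x.symm)
  -- E3 : |SA| = 1, SA = {a}, deg a = 3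
  have hdisjB : SB ∩ gad = ∅ := by
    ext z
    simp only [Set.mem_inter_iff, Set.mem_empty_iff_false, iff_false]
    rintro ⟨hzSB, (rfl | rfl | rfl)⟩
    · exact hb₀SB hzSB
    · exact hbip.not_mem_B hv₁A (hSBB hzSB)
    · exact hbip.not_mem_B hv₂A (hSBB hzSB)
  have hcardTB : (fm '' SB).ncard = SB.ncard :=
    Set.ncard_image_of_injOn (hinj_disj SB hdisjB)
  have hTBsub : fm '' SB ⊆ BH := by
    rintro t ⟨z, hzSB, rfl⟩
    exact ⟨z, ⟨hSBB hzSB, fun h => hb₀SB (h ▸ hzSB)⟩, rfl⟩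
  have hbndB : (setNbhd (H.deleteEdges {f}) (fm '' SB)).ncard ≤ SB.ncard + 1 := by
    calc (setNbhd (H.deleteEdges {f}) (fm '' SB)).ncard
        ≤ (fm '' setNbhd J SB).ncard :=
          Set.ncard_le_ncard (hproj SB hdisjB) (Set.toFinite _)
      _ ≤ (setNbhd J SB).ncard := Set.ncard_image_le (Set.toFinite _)
      _ = SB.ncard + 1 := hNJB_eq
  have hchB : ¬ (SB.ncard + 2 ≤ BH.ncard) := by
    intro hle
    have := brace_nbhd_ge hbipHf.symm hbrHf hTBsub
      (hSBne.image fm) (by rw [hcardTB]; exact hle)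
    rw [hcardTB] at this
    omega
  rw [hBHcard, ← hcardAB] at hchB
  have hSA_eq1 : SA.ncard = 1 := by omega
  obtain ⟨x₀, hx₀⟩ := Set.ncard_eq_one.mp hSA_eq1
  have hSAa : SA = {a} := by
    rw [hx₀]
    have : a = x₀ := by rw [hx₀] at haSA; exact haSA
    rw [this]
  have hdega : mdeg G a = 3 := by
    have h1 : (setNbhd G SA).ncard = SA.ncard + 2 := by omega
    rw [hSAa, setNbhd_singleton, Set.ncard_singleton] at h1
    exact h1
  obtain ⟨hconnHf, hEneHf, hmcHf'⟩ := hbrHf.2.1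
  have hSB_eq : SB.ncard = A.ncard - 2 := by omega
  have hfmaAH : fm a ∈ AH := ⟨a, haA, rfl⟩
  have hfmbBH : fm b ∈ BH := ⟨b, ⟨hbB, hbb₀⟩, rfl⟩
  -- E4 : a ∈ {v₁, v₂}
  have haouter : a = v₁ ∨ a = v₂ := by
    by_contra hcon
    push_neg at hcon
    obtain ⟨hav₁, hav₂⟩ := hcon
    have hv₁mem : v₁ ∈ setNbhd J SB := by
      rw [hNJBset]
      exact ⟨hv₁A, by rw [hSAa]; exact fun hmem => hav₁ (Set.mem_singleton_iff.mp hmem).symm⟩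
    have hv₂mem : v₂ ∈ setNbhd J SB := by
      rw [hNJBset]
      exact ⟨hv₂A, by rw [hSAa]; exact fun hmem => hav₂ (Set.mem_singleton_iff.mp hmem).symm⟩
    have himg_lt : (fm '' setNbhd J SB).ncard ≤ (setNbhd J SB).ncard - 1 :=
      ncard_image_lt_of_collision hv₁mem hv₂mem hv12ne (hfmb₀v₁.symm.trans hfmb₀v₂)
    have hbnd2 : (setNbhd (H.deleteEdges {f}) (fm '' SB)).ncard ≤ SB.ncard := by
      have h1 := Set.ncard_le_ncard (hproj SB hdisjB) (Set.toFinite _)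
      omega
    have hproper : fm '' SB ≠ BH := by
      intro h
      have h2 := congrArg Set.ncard h
      rw [hcardTB, hBHcard, ← hcardAB] at h2
      omega
    have hge := nbhd_ge_succ hbipHf.symm hconnHf hmcHf' hTBsub (hSBne.image fm) hproper
    rw [hcardTB] at hge
    omega
  -- |A| ≥ 4
  have hn4 : 4 ≤ A.ncard := by
    by_contra hn4
    have hA3 : A.ncard = 3 := by omega
    have hsing : ({fm b} : Set W) ⊆ BH := by simpa using hfmbBH
    have hproper : ({fm b} : Set W) ≠ BH := by
      intro h
      have h2 := congrArg Set.ncard h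
      rw [Set.ncard_singleton, hBHcard, ← hcardAB, hA3] at h2
      omega
    have hge := nbhd_ge_succ hbipHf.symm hconnHf hmcHf' hsing
      (Set.singleton_nonempty _) hproper
    rw [Set.ncard_singleton, setNbhd_singleton] at hge
    have hsub : (H.deleteEdges {f}).neighborSet (fm b) ⊆ AH \ {fm a} := by
      intro y hy
      rw [SimpleGraph.mem_neighborSet, SimpleGraph.deleteEdges_adj] at hy
      obtain ⟨hyH, hynef⟩ := hy
      refine ⟨hbipH.symm.mem_B_of_adj hfmbBH hyH, ?_⟩
      simp only [Set.mem_singleton_iff]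
      intro h
      apply hynef
      rw [Set.mem_singleton_iff, hfeq, h]
      exact Sym2.eq_swap
    have hcard2 := Set.ncard_le_ncard hsub (Set.toFinite _)
    rw [Set.ncard_diff_singleton_of_mem hfmaAH, hAHcard, hA3] at hcard2
    omega
  -- the other outer vertex
  obtain ⟨vo, hvoA, hvo_ne, hfma_vo, hgad_av⟩ :
      ∃ vo : V, vo ∈ A ∧ vo ≠ a ∧ fm a = fm vo ∧
        (∀ z ∈ gad, z = b₀ ∨ z = a ∨ z = vo) := by
    rcases haouter with h | h
    · refine ⟨v₂, hv₂A, fun hh => hv12ne (hh.trans h).symm,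
        by rw [h]; exact hfmb₀v₁.symm.trans hfmb₀v₂, ?_⟩
      rintro z (rfl | rfl | rfl)
      · exact Or.inl rfl
      · exact Or.inr (Or.inl h.symm)
      · exact Or.inr (Or.inr rfl)
    · refine ⟨v₁, hv₁A, fun hh => hv12ne (h ▸ hh), ?_, ?_⟩
      · rw [h]; exact hfmb₀v₂.symm.trans hfmb₀v₁
      · rintro z (rfl | rfl | rfl)
        · exact Or.inl rfl
        · exact Or.inr (Or.inr rfl)
        · exact Or.inr (Or.inl h.symm)
  have hbgad : b ∉ gad := by
    rintro (rfl | rfl | rfl)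
    · exact hbb₀ rfl
    · exact hbv₁ rfl
    · exact hbv₂ rfl
  -- E5 : deg b ≥ 4
  have hdegb : 4 ≤ mdeg G b := by
    by_contra hdegb
    have hdef : mdeg G b = (G.neighborSet b).ncard := rfl
    have hb3 : (G.neighborSet b).ncard = 3 := by
      have := hminDeg b
      omega
    -- b is not adjacent to vo
    have hnotadj : ¬ G.Adj b vo := by
      intro hadjvo
      have hmem1 : s(b, a) ∈ G'.edgeSet := (SimpleGraph.mem_edgeSet _).mpr hadjab.symm
      have hG'bvo : G'.Adj b vo := by
        rw [hG'def, SimpleGraph.deleteEdges_adj]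
        refine ⟨hadjvo, ?_⟩
        simp only [Set.mem_singleton_iff, Sym2.eq_iff]
        rintro (⟨h1, _⟩ | ⟨h1, _⟩)
        · exact hbb₀ h1
        · exact hbw h1
      have hmem2 : s(b, vo) ∈ G'.edgeSet := (SimpleGraph.mem_edgeSet _).mpr hG'bvo
      have hmapeq : Sym2.map fm s(b, a) = Sym2.map fm s(b, vo) := by
        rw [Sym2.map_pair_eq, Sym2.map_pair_eq, hfma_vo]
      have hnd : ¬ (Sym2.map fm s(b, a)).IsDiag := by
        rw [Sym2.map_pair_eq]
        rw [Sym2.mk_isDiag_iff]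
        exact hfmab.symm
      have := hsimple _ hmem1 _ hmem2 hmapeq hnd
      rw [Sym2.eq_iff] at this
      rcases this with ⟨_, h2⟩ | ⟨h1, _⟩
      · exact hvo_ne h2.symm
      · exact hbip.not_mem_B hvoA (h1 ▸ hbB)
    -- N_H(fm b) is the image of N_G(b)
    have hNH : H.neighborSet (fm b) = fm '' (G.neighborSet b) := by
      apply Set.Subset.antisymm
      · intro y hy
        rw [SimpleGraph.mem_neighborSet, hadjH _ _] at hy
        obtain ⟨hne, u, v, huv, hu, hvv⟩ := hy
        have hub : u = b := by
          rcases (hfib' u b).mp hu with h | ⟨_, h2⟩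
          · exact h
          · exact absurd h2 hbgad
        subst hub
        exact ⟨v, ((SimpleGraph.deleteEdges_adj).mp huv).1, hvv⟩
      · rintro y ⟨z, hz, rfl⟩
        rw [SimpleGraph.mem_neighborSet] at hz ⊢
        have hG'bz : G'.Adj b z := by
          rw [hG'def, SimpleGraph.deleteEdges_adj]
          refine ⟨hz, ?_⟩
          simp only [Set.mem_singleton_iff, Sym2.eq_iff]
          rintro (⟨h1, _⟩ | ⟨h1, _⟩)
          · exact hbb₀ h1
          · exact hbw h1
        rw [hadjH _ _]
        refine ⟨?_, b, z, hG'bz, rfl, rfl⟩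
        intro hcon
        rcases (hfib' b z).mp hcon with h | ⟨h1, _⟩
        · exact hz.ne h
        · exact hbgad h1
    have hinjNb : Set.InjOn fm (G.neighborSet b) := by
      intro u hu v hv heq
      rcases (hfib' u v).mp heq with h | ⟨h1, h2⟩
      · exact h
      have hu' : u = a := by
        rcases hgad_av u h1 with h | h | h
        · exact absurd (h ▸ hu : G.Adj b b₀) (fun hh =>
            hbip.not_mem_B (hbip.symm.mem_B_of_adj hbB hh) hb₀B)
        · exact h
        · exact absurd (h ▸ hu) hnotadj
      have hv' : v = a := by
        rcases hgad_av v h2 with h | h | h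
        · exact absurd (h ▸ hv : G.Adj b b₀) (fun hh =>
            hbip.not_mem_B (hbip.symm.mem_B_of_adj hbB hh) hb₀B)
        · exact h
        · exact absurd (h ▸ hv) hnotadj
      rw [hu', hv']
    have hNHcard : (H.neighborSet (fm b)).ncard = 3 := by
      rw [hNH, Set.ncard_image_of_injOn hinjNb, hb3]
    have hfmaNH : fm a ∈ H.neighborSet (fm b) := by
      rw [hNH]
      exact ⟨a, hGab.symm, rfl⟩
    have hNHf : (H.deleteEdges {f}).neighborSet (fm b) = H.neighborSet (fm b) \ {fm a} := by
      ext y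
      simp only [SimpleGraph.mem_neighborSet, SimpleGraph.deleteEdges_adj, Set.mem_diff,
        Set.mem_singleton_iff]
      constructor
      · rintro ⟨h1, h2⟩
        refine ⟨h1, ?_⟩
        intro h3
        apply h2
        rw [hfeq, h3]
        exact Sym2.eq_swap
      · rintro ⟨h1, h2⟩
        refine ⟨h1, ?_⟩
        rw [hfeq]
        intro h3
        rw [Sym2.eq_iff] at h3
        rcases h3 with ⟨h4, _⟩ | ⟨_, h5⟩
        · exact hfmab h4.symm
        · exact h2 h5
    have hNHfcard : ((H.deleteEdges {f}).neighborSet (fm b)).ncard = 2 := by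
      rw [hNHf, Set.ncard_diff_singleton_of_mem hfmaNH, hNHcard]
    have hsing : ({fm b} : Set W) ⊆ BH := by simpa using hfmbBH
    have hge := brace_nbhd_ge hbipHf.symm hbrHf hsing (Set.singleton_nonempty _)
      (by rw [Set.ncard_singleton, hBHcard, ← hcardAB]; omega)
    rw [Set.ncard_singleton, setNbhd_singleton, hNHfcard] at hge
    omega
  -- conclusion
  have houter : IsOuterVertex G' a := by
    refine ⟨b₀, hinner, ?_⟩
    rcases haouter with h | h
    · rw [h]; exact hv₁adj
    · rw [h]; exact hv₂adj
  exact ⟨b, a, Sym2.eq_swap, houter, hdega, hdegb⟩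

end MainCase
/-- Let `G ∉ 𝒢` be a minimal brace, `e = b₀w` a strictly thin edge
of index one with cubic end `b₀`, and suppose the simple brace `H = Ĝ−e` is not
minimal. Then for every superfluous edge `f` of `H` (viewed in `G − e` as the edge
`f'`), `G − e` has a cubic outer vertex that is an end of `f`, and the other end of
`f` is noncubic. -/
theorem statement13 {V W : Type*} [Fintype V] (G : SimpleGraph V)
    (H : SimpleGraph W) (fm : V → W) (b₀ w : V)
    (hmin : IsMinimalBrace G) (hnotG : ¬ InMcCuaigFamily G)
    (hthin : IsStrictlyThinVia G s(b₀, w) H fm)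
    (hb₀ : mdeg G b₀ = 3)
    (hidx : thinIndex (G.deleteEdges {s(b₀, w)}) = 1)
    (hHnotmin : ¬ IsMinimalBrace H)
    (f : Sym2 W) (hf : IsSuperfluous H f)
    (f' : Sym2 V) (hf' : f' ∈ (G.deleteEdges {s(b₀, w)}).edgeSet)
    (hmap : Sym2.map fm f' = f) :
    ∃ u v : V, f' = s(u, v) ∧
      IsOuterVertex (G.deleteEdges {s(b₀, w)}) v ∧ mdeg G v = 3 ∧ 4 ≤ mdeg G u := by
  obtain ⟨A, B, hbip⟩ := hmin.1.1
  rcases hbip.mem_or b₀ with hA | hB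
  · exact main_case G H fm b₀ w hbip.symm hA hmin hthin hb₀ hidx f hf f' hf' hmap
  · exact main_case G H fm b₀ w hbip hB hmin hthin hb₀ hidx f hf f' hf' hmap

end MinimalBraces
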